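/- arXiv:2509.26175 — 7 statements merged into one kernel-verified Lean document; each statement's English description precedes it below -/
import Mathlib

section
/- Let π be a probability density on ℝ proportional to exp(−U(x)), where U : ℝ → ℝ is continuously differentiable and strictly convex with U(0) = 0 and U′(0) = 0, and suppose π has finite variance s² = Var(π) > 0. Then min{U(−s), U(s)} ≤ 2.6. -/
open MeasureTheory

open Set

lemma exp_moment0 {r : ℝ} (hr : 0 < r) :
    ∫ x in Ioi (0:ℝ), Real.exp (-(r * x)) = 1 / r := by
  have h := Real.integral_rpow_mul_exp_neg_mul_Ioi (by norm_num : (0:ℝ) < 1) hr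
  simpa using h

lemma exp_moment2 {r : ℝ} (hr : 0 < r) :
    ∫ x in Ioi (0:ℝ), x ^ 2 * Real.exp (-(r * x)) = 2 / r ^ 3 := by
  have h := Real.integral_rpow_mul_exp_neg_mul_Ioi (by norm_num : (0:ℝ) < 3) hr
  have h1 : ∫ x in Ioi (0:ℝ), x ^ ((3:ℝ) - 1) * Real.exp (-(r * x))
      = ∫ x in Ioi (0:ℝ), x ^ 2 * Real.exp (-(r * x)) := by
    refine setIntegral_congr_fun measurableSet_Ioi (fun x hx => ?_)
    have h3 : ((3:ℝ) - 1) = ((2:ℕ) : ℝ) := by norm_num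
    rw [h3, Real.rpow_natCast]
  have h2 : Real.Gamma 3 = 2 := by
    have := Real.Gamma_nat_eq_factorial 2
    norm_num at this
    convert this using 2 <;> norm_num
  rw [h1] at h
  rw [h, h2]
  have hr' : r ≠ 0 := ne_of_gt hr
  rw [show ((3:ℝ)) = ((3:ℕ):ℝ) by norm_num, Real.rpow_natCast]
  field_simp

lemma integrableOn_poly_exp {r s : ℝ} (hr : 0 < r) :
    IntegrableOn (fun x : ℝ => (x ^ 2 - s ^ 2) * Real.exp (-(r * x))) (Ioi 0) := by
  have h2 : IntegrableOn (fun x : ℝ => x ^ 2 * Real.exp (-(r * x))) (Ioi 0) := by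
    have := integrableOn_rpow_mul_exp_neg_mul_rpow (by norm_num : (-1:ℝ) < 2) (by norm_num : (0:ℝ) < 1) hr
    refine this.congr_fun (fun x hx => ?_) measurableSet_Ioi
    dsimp only
    rw [Real.rpow_one, show ((2:ℝ)) = ((2:ℕ):ℝ) by norm_num, Real.rpow_natCast, neg_mul]
  have h0 : IntegrableOn (fun x : ℝ => Real.exp (-(r * x))) (Ioi 0) := by
    simpa [neg_mul] using exp_neg_integrableOn_Ioi 0 hr
  refine IntegrableOn.congr_fun (h2.sub (h0.const_mul (s ^ 2))) (fun x _ => ?_) measurableSet_Ioi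
  simp only [Pi.sub_apply]
  ring

lemma poly_exp_integral {r s : ℝ} (hr : 0 < r) :
    ∫ x in Ioi (0:ℝ), (x ^ 2 - s ^ 2) * Real.exp (-(r * x)) = 2 / r ^ 3 - s ^ 2 / r := by
  have h2 : IntegrableOn (fun x : ℝ => x ^ 2 * Real.exp (-(r * x))) (Ioi 0) := by
    have := integrableOn_rpow_mul_exp_neg_mul_rpow (by norm_num : (-1:ℝ) < 2) (by norm_num : (0:ℝ) < 1) hr
    refine this.congr_fun (fun x hx => ?_) measurableSet_Ioi
    dsimp only
    rw [Real.rpow_one, show ((2:ℝ)) = ((2:ℕ):ℝ) by norm_num, Real.rpow_natCast, neg_mul]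
  have h0 : IntegrableOn (fun x : ℝ => Real.exp (-(r * x))) (Ioi 0) := by
    simpa [neg_mul] using exp_neg_integrableOn_Ioi 0 hr
  have heq : ∫ x in Ioi (0:ℝ), (x ^ 2 - s ^ 2) * Real.exp (-(r * x))
      = ∫ x in Ioi (0:ℝ), (x ^ 2 * Real.exp (-(r * x)) - s ^ 2 * Real.exp (-(r * x))) := by
    congr 1; funext x; ring
  rw [heq, integral_sub h2 (h0.const_mul (s ^ 2)), integral_const_mul,
    exp_moment2 hr, exp_moment0 hr]
  field_simp

lemma convex_chord_bound {U : ℝ → ℝ} (hc : ConvexOn ℝ Set.univ U) (hU0 : U 0 = 0)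
    {s : ℝ} (hs : 0 < s) :
    ∀ x : ℝ, 0 ≤ x →
      (x ^ 2 - s ^ 2) * Real.exp (-U x) ≤ (x ^ 2 - s ^ 2) * Real.exp (-(U s / s * x)) := by
  intro x hx
  rcases le_total x s with h | h
  · -- here U x ≤ U s / s * x
    have hkey : U x ≤ U s / s * x := by
      have ht0 : 0 ≤ x / s := div_nonneg hx hs.le
      have ht1 : x / s ≤ 1 := (div_le_one hs).2 h
      have hcc := hc.2 (Set.mem_univ (0:ℝ)) (Set.mem_univ s)
        (by linarith : (0:ℝ) ≤ 1 - x / s) ht0 (by ring)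
      simp only [smul_eq_mul, mul_zero, zero_add, hU0] at hcc
      have hxx : x / s * s = x := div_mul_cancel₀ x hs.ne'
      rw [hxx] at hcc
      calc U x ≤ x / s * U s := hcc
        _ = U s / s * x := by ring
    have hsign : x ^ 2 - s ^ 2 ≤ 0 := by nlinarith
    have hexp : Real.exp (-(U s / s * x)) ≤ Real.exp (-U x) :=
      Real.exp_le_exp.2 (by linarith)
    exact mul_le_mul_of_nonpos_left hexp hsign
  · -- here U s / s * x ≤ U x
    have hx0 : 0 < x := lt_of_lt_of_le hs h
    have hkey : U s / s * x ≤ U x := by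
      have ht0 : 0 ≤ s / x := div_nonneg hs.le hx0.le
      have ht1 : s / x ≤ 1 := (div_le_one hx0).2 h
      have hcc := hc.2 (Set.mem_univ (0:ℝ)) (Set.mem_univ x)
        (by linarith : (0:ℝ) ≤ 1 - s / x) ht0 (by ring)
      simp only [smul_eq_mul, mul_zero, zero_add, hU0] at hcc
      have hxx : s / x * x = s := div_mul_cancel₀ s hx0.ne'
      rw [hxx] at hcc
      have : U s ≤ s / x * U x := hcc
      rw [div_mul_eq_mul_div, div_le_iff₀ hs]
      calc U s * x ≤ (s / x * U x) * x := by nlinarith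
        _ = U x * s := by field_simp
    have hsign : 0 ≤ x ^ 2 - s ^ 2 := by nlinarith
    have hexp : Real.exp (-U x) ≤ Real.exp (-(U s / s * x)) :=
      Real.exp_le_exp.2 (by linarith)
    exact mul_le_mul_of_nonneg_left hexp hsign


/-- **Potential growth at one standard deviation (Lemma 3.2).**
Let `π ∝ exp(-U)` be a probability density on `ℝ` with `U` continuously differentiable
and strictly convex, normalized so that `U(0) = U'(0) = 0`, and suppose `π` has finite
positive variance `s² = Var(π)`.  Then `min{U(-s), U(s)} ≤ 2.6`. -/
theorem potential_at_one_sd_le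
    (U : ℝ → ℝ)
    (hU_smooth : ContDiff ℝ 1 U)
    (hU_conv : StrictConvexOn ℝ Set.univ U)
    (hU0 : U 0 = 0)
    (hU'0 : deriv U 0 = 0)
    (hU_int : Integrable (fun x => Real.exp (-U x)))
    (π : ℝ → ℝ)
    (hπ : ∀ x, π x = Real.exp (-U x) / ∫ z, Real.exp (-U z))
    -- finite positive variance s² = Var(π)
    (hm1 : Integrable (fun x => x * π x))
    (hm2 : Integrable (fun x => x ^ 2 * π x))
    (s : ℝ) (hs_pos : 0 < s)
    (hs : s ^ 2 = (∫ x, x ^ 2 * π x) - (∫ x, x * π x) ^ 2) :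
    min (U (-s)) (U s) ≤ 2.6 := by
  by_contra hcon
  push_neg at hcon
  have hL : (2.6 : ℝ) < U s := lt_of_lt_of_le hcon (min_le_right _ _)
  have hR : (2.6 : ℝ) < U (-s) := lt_of_lt_of_le hcon (min_le_left _ _)
  set Z := ∫ z, Real.exp (-U z) with hZ
  have hZpos : 0 < Z := integral_exp_pos hU_int
  have hconv : ConvexOn ℝ Set.univ U := hU_conv.convexOn
  -- integrability of x² e^{-U}
  have hM2 : Integrable (fun x => x ^ 2 * Real.exp (-U x)) := by
    refine (hm2.mul_const Z).congr (Filter.Eventually.of_forall fun x => ?_)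
    simp only [hπ]
    field_simp
  set f : ℝ → ℝ := fun x => (x ^ 2 - s ^ 2) * Real.exp (-U x) with hfdef
  have hf : Integrable f := by
    refine (hM2.sub (hU_int.const_mul (s ^ 2))).congr
      (Filter.Eventually.of_forall fun x => ?_)
    simp only [Pi.sub_apply, hfdef]
    ring
  -- right-hand bound
  have hrL : 0 < U s / s := div_pos (by linarith) hs_pos
  have hIright : ∫ x in Set.Ioi (0:ℝ), f x ≤ 2 / (U s / s) ^ 3 - s ^ 2 / (U s / s) := by
    calc ∫ x in Set.Ioi (0:ℝ), f x
        ≤ ∫ x in Set.Ioi (0:ℝ), (x ^ 2 - s ^ 2) * Real.exp (-(U s / s * x)) :=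
          setIntegral_mono_on hf.integrableOn (integrableOn_poly_exp hrL)
            measurableSet_Ioi
            (fun x hx => convex_chord_bound hconv hU0 hs_pos x (le_of_lt hx))
      _ = 2 / (U s / s) ^ 3 - s ^ 2 / (U s / s) := poly_exp_integral hrL
  -- left-hand side via reflection
  set V : ℝ → ℝ := fun x => U (-x) with hVdef
  have hVconv : ConvexOn ℝ Set.univ V := by
    refine ⟨convex_univ, fun x _ y _ a b ha hb hab => ?_⟩
    have h := hconv.2 (Set.mem_univ (-x)) (Set.mem_univ (-y)) ha hb hab
    simp only [smul_eq_mul, hVdef] at h ⊢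
    convert h using 2
    ring
  have hV0 : V 0 = 0 := by simp [hVdef, hU0]
  have hVs : V s = U (-s) := rfl
  have hrR : 0 < V s / s := div_pos (by rw [hVs]; linarith) hs_pos
  set g : ℝ → ℝ := fun x => f (-x) with hgdef
  have hg : Integrable g := hf.comp_neg
  have hgeq : ∀ x : ℝ, g x = (x ^ 2 - s ^ 2) * Real.exp (-V x) := by
    intro x
    simp only [hgdef, hfdef, hVdef, neg_neg, neg_sq]
  have hIleft : ∫ x in Set.Iic (0:ℝ), f x = ∫ x in Set.Ioi (0:ℝ), g x := by
    have h := integral_comp_neg_Iic (0:ℝ) g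
    rw [neg_zero] at h
    rw [← h]
    refine setIntegral_congr_fun measurableSet_Iic (fun x _ => ?_)
    simp only [hgdef, neg_neg]
  have hIleft2 : ∫ x in Set.Ioi (0:ℝ), g x ≤ 2 / (V s / s) ^ 3 - s ^ 2 / (V s / s) := by
    calc ∫ x in Set.Ioi (0:ℝ), g x
        ≤ ∫ x in Set.Ioi (0:ℝ), (x ^ 2 - s ^ 2) * Real.exp (-(V s / s * x)) := by
          refine setIntegral_mono_on hg.integrableOn (integrableOn_poly_exp hrR)
            measurableSet_Ioi (fun x hx => ?_)
          rw [hgeq x]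
          exact convex_chord_bound hVconv hV0 hs_pos x (le_of_lt hx)
      _ = 2 / (V s / s) ^ 3 - s ^ 2 / (V s / s) := poly_exp_integral hrR
  -- arithmetic negativity of the bounds
  have harith : ∀ L : ℝ, 2.6 < L → 2 / (L / s) ^ 3 - s ^ 2 / (L / s) < 0 := by
    intro L hL'
    have hL0 : 0 < L := by linarith
    have hval : 2 / (L / s) ^ 3 - s ^ 2 / (L / s) = (2 - L ^ 2) * s ^ 3 / L ^ 3 := by
      field_simp
    rw [hval]
    apply div_neg_of_neg_of_pos
    · apply mul_neg_of_neg_of_pos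
      · nlinarith
      · positivity
    · positivity
  -- total integral is negative
  have htot : ∫ x, f x < 0 := by
    rw [← intervalIntegral.integral_Iic_add_Ioi hf.integrableOn hf.integrableOn]
    have h1 := harith (U s) hL
    have h2 := harith (V s) (by rw [hVs]; exact hR)
    rw [hIleft]
    linarith
  -- expand the integral of f
  have hfi : ∫ x, f x = (∫ x, x ^ 2 * Real.exp (-U x)) - s ^ 2 * Z := by
    have heq : ∫ x, f x
        = ∫ x, (x ^ 2 * Real.exp (-U x) - s ^ 2 * Real.exp (-U x)) := by
      congr 1; funext x; simp only [hfdef]; ring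
    rw [heq, integral_sub hM2 (hU_int.const_mul _), integral_const_mul, hZ]
  have hlt : (∫ x, x ^ 2 * Real.exp (-U x)) < s ^ 2 * Z := by linarith [htot, hfi.symm ▸ htot]
  -- second moment of π
  have hE2 : ∫ x, x ^ 2 * π x = (∫ x, x ^ 2 * Real.exp (-U x)) / Z := by
    rw [← integral_div]
    congr 1; funext x
    rw [hπ x]
    ring
  have hE2lt : ∫ x, x ^ 2 * π x < s ^ 2 := by
    rw [hE2, div_lt_iff₀ hZpos]
    linarith
  nlinarith [sq_nonneg (∫ x, x * π x)]
end

section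
/- Let P be a Markov transition kernel on ℝ^d with stationary distribution π (a Borel probability measure). Suppose: (1) π satisfies a Cheeger isoperimetric inequality with constant Ch(π) > 0, i.e. for all Borel sets A, π⁺(A) ≥ (1/Ch(π))·min{π(A), π(A^c)}; and (2) there exist δ > 0 and 0 < h < 1 such that for all x, y ∈ ℝ^d with ‖x − y‖ ≤ δ, the total variation distance satisfies d_TV(P(x,·), P(y,·)) ≤ 1 − h. Then the conductance of P satisfies Φ(P) ≥ min{ h/4 , δ·h/(8·Ch(π)) }. -/
open MeasureTheory

theorem growth_of_liminf_slope (g : ℝ → ℝ) (hg : Monotone g) (a b c : ℝ) (hab : a ≤ b)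
    (H : ∀ s ∈ Set.Ico a b, ∀ c' < c,
      ∀ᶠ r in nhdsWithin 0 (Set.Ioi 0), c' < (g (s + r) - g s) / r) :
    c * (b - a) ≤ g b - g a := by
  rcases eq_or_lt_of_le hab with rfl | hab'
  · simp
  have key : ∀ c' < c, c' * (b - a) ≤ g b - g a := by
    intro c' hc'
    rcases le_or_gt c' 0 with hc0 | hc0
    · have h1 : c' * (b - a) ≤ 0 := mul_nonpos_of_nonpos_of_nonneg hc0 (by linarith)
      have h2 := hg hab
      linarith
    set S : Set ℝ := {t | t ∈ Set.Icc a b ∧ c' * (t - a) ≤ g t - g a} with hS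
    have haS : a ∈ S := by constructor <;> simp [hab]
    have hbdd : BddAbove S := ⟨b, fun t ht => ht.1.2⟩
    set T := sSup S with hT
    have hTmem : T ∈ Set.Icc a b :=
      ⟨le_csSup hbdd haS, csSup_le ⟨a, haS⟩ (fun t ht => ht.1.2)⟩
    have hTineq : c' * (T - a) ≤ g T - g a := by
      by_contra hcon
      push_neg at hcon
      obtain ⟨t, htS, htgt⟩ := exists_lt_of_lt_csSup (Set.nonempty_of_mem haS)
        (show T - (c' * (T - a) - (g T - g a)) / c' < T by
          have : 0 < (c' * (T - a) - (g T - g a)) / c' := div_pos (by linarith) hc0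
          linarith)
      have h1 : c' * (t - a) ≤ g t - g a := htS.2
      have h2 : g t ≤ g T := hg (le_csSup hbdd htS)
      have h3 : c' * (T - t) < c' * (T - a) - (g T - g a) := by
        have h4 : T - t < (c' * (T - a) - (g T - g a)) / c' := by linarith
        calc c' * (T - t) < c' * ((c' * (T - a) - (g T - g a)) / c') :=
              (mul_lt_mul_iff_right₀ hc0).2 h4
          _ = c' * (T - a) - (g T - g a) := by field_simp
      nlinarith [h1, h2, h3]
    have hTb : T = b := by
      by_contra hne
      have hTlt : T < b := lt_of_le_of_ne hTmem.2 hne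
      have hev := H T ⟨hTmem.1, hTlt⟩ c' hc'
      have hmem : Set.Ioo (0:ℝ) (b - T) ∈ nhdsWithin 0 (Set.Ioi 0) :=
        Ioo_mem_nhdsGT_of_mem ⟨le_refl 0, by linarith⟩
      obtain ⟨r, hrslope, hrmem⟩ :=
        (hev.and (Filter.eventually_of_mem hmem (fun x hx => hx))).exists
      have hr0 : 0 < r := hrmem.1
      have hTr : T + r ∈ S := by
        refine ⟨⟨by linarith [hTmem.1], by linarith [hrmem.2]⟩, ?_⟩
        have h5 : c' * r < g (T + r) - g T := by
          have := (lt_div_iff₀ hr0).mp hrslope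
          linarith
        linarith [hTineq]
      have : T + r ≤ T := le_csSup hbdd hTr
      linarith
    rw [hTb] at hTineq
    exact hTineq
  by_contra hcon
  push_neg at hcon
  have hba : 0 < b - a := by linarith
  set c' := (g b - g a) / (b - a) + (c - (g b - g a)/(b-a)) / 2 with hc'
  have h1 : (g b - g a)/(b-a) < c := (div_lt_iff₀ hba).2 (by nlinarith [hcon])
  have h2 : c' < c := by rw [hc']; linarith
  have h3 : (g b - g a)/(b-a) < c' := by rw [hc']; linarith
  have h5 := key c' h2
  have h4 : c' ≤ (g b - g a)/(b-a) := (le_div_iff₀ hba).2 (by linarith)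
  linarith

/-- **Conductance from isoperimetry and one-step overlap (Lemma 2.2).**
Let `P` be a Markov transition kernel on `ℝ^d` with stationary distribution `π`.
If (1) `π` satisfies a Cheeger isoperimetric inequality with constant `Ch > 0`
(`π⁺(A) ≥ (1/Ch)·min{π(A), π(Aᶜ)}` for every Borel `A`, where `π⁺` is the boundary
measure defined via liminf of thickenings), and (2) there are `δ > 0`, `0 < h < 1`
such that `d_TV(P(x,·), P(y,·)) ≤ 1 - h` whenever `‖x - y‖ ≤ δ`, then the conductance
satisfies `Φ(P) ≥ min{ h/4 , δh/(8 Ch) }`. -/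
theorem conductance_of_isoperimetry_and_overlap
    (d : ℕ)
    (π : Measure (EuclideanSpace ℝ (Fin d))) [IsProbabilityMeasure π]
    -- the Markov kernel
    (P : EuclideanSpace ℝ (Fin d) → Measure (EuclideanSpace ℝ (Fin d)))
    (hP_prob : ∀ x, IsProbabilityMeasure (P x))
    (hP_meas : ∀ A : Set (EuclideanSpace ℝ (Fin d)), MeasurableSet A →
      Measurable (fun x => P x A))
    -- stationarity of π for P
    (hP_stat : ∀ A : Set (EuclideanSpace ℝ (Fin d)), MeasurableSet A →
      ∫⁻ x, P x A ∂π = π A)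
    -- the boundary measure π⁺(A) (liminf as r → 0⁺ of (π(Aʳ) − π(A))/r)
    (bm : Set (EuclideanSpace ℝ (Fin d)) → ℝ)
    (hbm : ∀ A, bm A = Filter.liminf
      (fun r : ℝ => ((π (Metric.thickening r A)).toReal - (π A).toReal) / r)
      (nhdsWithin 0 (Set.Ioi 0)))
    -- (1) Cheeger isoperimetric inequality with constant Ch > 0
    (Ch : ℝ) (hCh_pos : 0 < Ch)
    (hiso : ∀ A : Set (EuclideanSpace ℝ (Fin d)), MeasurableSet A →
      (1 / Ch) * min (π A).toReal (π Aᶜ).toReal ≤ bm A)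
    -- (2) one-step overlap: d_TV(P(x,·), P(y,·)) ≤ 1 − h whenever ‖x − y‖ ≤ δ
    (δ : ℝ) (hδ_pos : 0 < δ)
    (h : ℝ) (hh_pos : 0 < h) (hh_lt : h < 1)
    (hoverlap : ∀ x y : EuclideanSpace ℝ (Fin d), ‖x - y‖ ≤ δ →
      ∀ A : Set (EuclideanSpace ℝ (Fin d)), MeasurableSet A →
        |(P x A).toReal - (P y A).toReal| ≤ 1 - h) :
    -- conclusion: Φ(P) ≥ min{ h/4 , δh/(8 Ch) }
    ∀ A : Set (EuclideanSpace ℝ (Fin d)), MeasurableSet A → 0 < π A → π A < 1 →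
      min (h / 4) (δ * h / (8 * Ch)) * min (π A).toReal (π Aᶜ).toReal ≤
        ∫ x in A, (P x Aᶜ).toReal ∂π := by
  intro A hA hA0 hA1
  have measA : Measurable fun x => P x A := hP_meas A hA
  have measC : Measurable fun x => P x Aᶜ := hP_meas Aᶜ hA.compl
  -- basic bounds
  have hle1 : ∀ (x : EuclideanSpace ℝ (Fin d)) (S : Set (EuclideanSpace ℝ (Fin d))),
      (P x S).toReal ≤ 1 := by
    intro x S
    haveI := hP_prob x
    have h1 : P x S ≤ 1 := prob_le_one
    calc (P x S).toReal ≤ (1 : ENNReal).toReal := ENNReal.toReal_mono ENNReal.one_ne_top h1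
      _ = 1 := by simp
  have hsum : ∀ x, (P x A).toReal + (P x Aᶜ).toReal = 1 := by
    intro x
    haveI := hP_prob x
    have h1 : P x A + P x Aᶜ = 1 := by rw [measure_add_measure_compl hA, measure_univ]
    have h2 := congrArg ENNReal.toReal h1
    rwa [ENNReal.toReal_add (measure_ne_top _ _) (measure_ne_top _ _),
      ENNReal.toReal_one] at h2
  -- integrability
  have hintC : Integrable (fun x => (P x Aᶜ).toReal) π := by
    refine (integrable_const (1:ℝ)).mono' measC.ennreal_toReal.aestronglyMeasurable ?_
    refine Filter.Eventually.of_forall fun x => ?_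
    rw [Real.norm_eq_abs, abs_of_nonneg ENNReal.toReal_nonneg]
    exact hle1 x Aᶜ
  have hintA : Integrable (fun x => (P x A).toReal) π := by
    refine (integrable_const (1:ℝ)).mono' measA.ennreal_toReal.aestronglyMeasurable ?_
    refine Filter.Eventually.of_forall fun x => ?_
    rw [Real.norm_eq_abs, abs_of_nonneg ENNReal.toReal_nonneg]
    exact hle1 x A
  -- exchange identity
  have hexch : ∫ x in A, (P x Aᶜ).toReal ∂π = ∫ x in Aᶜ, (P x A).toReal ∂π := by
    have h1 : (∫⁻ x in A, P x Aᶜ ∂π) + ∫⁻ x in Aᶜ, P x Aᶜ ∂π = π Aᶜ := by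
      rw [lintegral_add_compl _ hA]; exact hP_stat Aᶜ hA.compl
    have h2 : (∫⁻ x in Aᶜ, P x A ∂π) + ∫⁻ x in Aᶜ, P x Aᶜ ∂π = π Aᶜ := by
      rw [← lintegral_add_left measA (fun x => P x Aᶜ)]
      have heq : ∀ x : EuclideanSpace ℝ (Fin d), P x A + P x Aᶜ = 1 := by
        intro x
        haveI := hP_prob x
        rw [measure_add_measure_compl hA, measure_univ]
      calc ∫⁻ x in Aᶜ, (P x A + P x Aᶜ) ∂π = ∫⁻ _ in Aᶜ, 1 ∂π :=
            lintegral_congr fun x => heq x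
        _ = π Aᶜ := setLIntegral_one _
    have h4 : (∫⁻ x in Aᶜ, P x Aᶜ ∂π) ≠ ⊤ := by
      refine ne_top_of_le_ne_top (measure_ne_top π Aᶜ) ?_
      calc ∫⁻ x in Aᶜ, P x Aᶜ ∂π ≤ ∫⁻ _ in Aᶜ, 1 ∂π := by
            refine lintegral_mono fun x => ?_
            haveI := hP_prob x
            exact prob_le_one
        _ = π Aᶜ := setLIntegral_one _
    have h5 : ∫⁻ x in A, P x Aᶜ ∂π = ∫⁻ x in Aᶜ, P x A ∂π := by
      apply (ENNReal.add_left_inj h4).mp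
      rw [h1, h2]
    rw [integral_toReal measC.aemeasurable
        (Filter.Eventually.of_forall fun x => measure_lt_top _ _),
      integral_toReal measA.aemeasurable
        (Filter.Eventually.of_forall fun x => measure_lt_top _ _), h5]
  -- the bad sets
  set A₁ : Set (EuclideanSpace ℝ (Fin d)) := A ∩ {x | (P x Aᶜ).toReal < h/2} with hA₁def
  set A₂ : Set (EuclideanSpace ℝ (Fin d)) := Aᶜ ∩ {x | (P x A).toReal < h/2} with hA₂def
  have hA₁m : MeasurableSet A₁ :=
    hA.inter (measurableSet_lt measC.ennreal_toReal measurable_const)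
  have hA₂m : MeasurableSet A₂ :=
    hA.compl.inter (measurableSet_lt measA.ennreal_toReal measurable_const)
  have hA₁sub : A₁ ⊆ A := Set.inter_subset_left
  have hA₂sub : A₂ ⊆ Aᶜ := Set.inter_subset_left
  -- lower bound tools
  have hlowC : ∀ S : Set (EuclideanSpace ℝ (Fin d)), MeasurableSet S → S ⊆ A →
      (∀ x ∈ S, h/2 ≤ (P x Aᶜ).toReal) →
      h/2 * (π S).toReal ≤ ∫ x in A, (P x Aᶜ).toReal ∂π := by
    intro S hSm hSA hSv
    have h1 : h/2 * (π S).toReal ≤ ∫ x in S, (P x Aᶜ).toReal ∂π :=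
      setIntegral_ge_of_const_le_real hSm (measure_ne_top π S) hSv hintC.integrableOn
    have h2 : ∫ x in S, (P x Aᶜ).toReal ∂π ≤ ∫ x in A, (P x Aᶜ).toReal ∂π :=
      setIntegral_mono_set hintC.integrableOn
        (Filter.Eventually.of_forall fun x => ENNReal.toReal_nonneg)
        (HasSubset.Subset.eventuallyLE hSA)
    linarith
  have hlowA : ∀ S : Set (EuclideanSpace ℝ (Fin d)), MeasurableSet S → S ⊆ Aᶜ →
      (∀ x ∈ S, h/2 ≤ (P x A).toReal) →
      h/2 * (π S).toReal ≤ ∫ x in Aᶜ, (P x A).toReal ∂π := by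
    intro S hSm hSA hSv
    have h1 : h/2 * (π S).toReal ≤ ∫ x in S, (P x A).toReal ∂π :=
      setIntegral_ge_of_const_le_real hSm (measure_ne_top π S) hSv hintA.integrableOn
    have h2 : ∫ x in S, (P x A).toReal ∂π ≤ ∫ x in Aᶜ, (P x A).toReal ∂π :=
      setIntegral_mono_set hintA.integrableOn
        (Filter.Eventually.of_forall fun x => ENNReal.toReal_nonneg)
        (HasSubset.Subset.eventuallyLE hSA)
    linarith
  have hdiff : ∀ S T : Set (EuclideanSpace ℝ (Fin d)), MeasurableSet T → T ⊆ S →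
      (π (S \ T)).toReal = (π S).toReal - (π T).toReal := by
    intro S T hTm hTS
    rw [measure_diff hTS hTm.nullMeasurableSet (measure_ne_top π T),
      ENNReal.toReal_sub_of_le (measure_mono hTS) (measure_ne_top π S)]
  -- values on the complements of the bad sets
  have hval1 : ∀ x ∈ A \ A₁, h/2 ≤ (P x Aᶜ).toReal := by
    intro x hx
    refine le_of_not_gt fun hlt => hx.2 ?_
    exact ⟨hx.1, hlt⟩
  have hval2 : ∀ x ∈ Aᶜ \ A₂, h/2 ≤ (P x A).toReal := by
    intro x hx
    refine le_of_not_gt fun hlt => hx.2 ?_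
    exact ⟨hx.1, hlt⟩
  -- abbreviations
  set m := min (π A).toReal (π Aᶜ).toReal with hmdef
  set M := min (h / 4) (δ * h / (8 * Ch)) with hMdef
  have hm0 : 0 ≤ m := le_min ENNReal.toReal_nonneg ENNReal.toReal_nonneg
  have hM4 : M ≤ h/4 := min_le_left _ _
  have hMδ : M ≤ δ * h / (8 * Ch) := min_le_right _ _
  have hM0 : 0 ≤ M := le_min (by linarith) (by positivity)
  have hmA : m ≤ (π A).toReal := min_le_left _ _
  have hmC : m ≤ (π Aᶜ).toReal := min_le_right _ _
  -- mass facts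
  have honeR : (π A).toReal + (π Aᶜ).toReal = 1 := by
    have h1 : π A + π Aᶜ = 1 := by rw [measure_add_measure_compl hA, measure_univ]
    have h2 := congrArg ENNReal.toReal h1
    rwa [ENNReal.toReal_add (measure_ne_top _ _) (measure_ne_top _ _),
      ENNReal.toReal_one] at h2
  by_cases hc1 : (π A₁).toReal ≤ (π A).toReal / 2
  · -- case 1
    have hkey := hlowC (A \ A₁) (hA.diff hA₁m) Set.diff_subset hval1
    have hd : (π (A \ A₁)).toReal = (π A).toReal - (π A₁).toReal := hdiff A A₁ hA₁m hA₁sub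
    have hMm : M * m ≤ (h/4) * (π A).toReal :=
      mul_le_mul hM4 (le_trans hmA le_rfl) hm0 (by linarith)
    nlinarith [hkey, hd, hMm]
  · by_cases hc2 : (π A₂).toReal ≤ (π Aᶜ).toReal / 2
    · -- case 2
      have hkey := hlowA (Aᶜ \ A₂) (hA.compl.diff hA₂m) Set.diff_subset hval2
      have hd : (π (Aᶜ \ A₂)).toReal = (π Aᶜ).toReal - (π A₂).toReal :=
        hdiff Aᶜ A₂ hA₂m hA₂sub
      have hMm : M * m ≤ (h/4) * (π Aᶜ).toReal := mul_le_mul hM4 hmC hm0 (by linarith)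
      rw [hexch]
      nlinarith [hkey, hd, hMm]
    · -- case 3
      push_neg at hc1 hc2
      -- positivity of m
      have hmpos : 0 < m := by
        refine lt_min ?_ ?_
        · exact ENNReal.toReal_pos (ne_of_gt hA0) (measure_ne_top _ _)
        · refine ENNReal.toReal_pos ?_ (measure_ne_top _ _)
          intro hz
          haveI : IsProbabilityMeasure π := inferInstance
          have h1 : π A + π Aᶜ = 1 := by rw [measure_add_measure_compl hA, measure_univ]
          rw [hz, add_zero] at h1
          exact absurd h1 (ne_of_lt hA1)
      -- separation between A₁ and A₂
      have hsep : ∀ x ∈ A₁, ∀ y ∈ A₂, ¬(‖x - y‖ ≤ δ) := by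
        intro x hx y hy hcon
        have hov := hoverlap x y hcon A hA
        have hx2 : (P x Aᶜ).toReal < h/2 := hx.2
        have hy2 : (P y A).toReal < h/2 := hy.2
        have hxs := hsum x
        have habs := abs_le.mp hov
        linarith [habs.1, habs.2]
      -- B s disjoint from A₂
      have hBdisj : ∀ s ≤ δ, ∀ z ∈ Metric.thickening s A₁ ∪ A₁, z ∉ A₂ := by
        intro s hs z hz hzA₂
        rcases hz with hz | hz
        · rcases Metric.mem_thickening_iff.mp hz with ⟨x, hxA₁, hdist⟩
          refine hsep x hxA₁ z hzA₂ ?_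
          rw [← dist_eq_norm]
          have hd2 : dist x z < s := by rwa [dist_comm] at hdist
          linarith
        · refine hsep z hz z hzA₂ ?_
          simp [hδ_pos.le]
      -- monotone g
      have hgmono : Monotone (fun s => (π (Metric.thickening s A₁ ∪ A₁)).toReal) := by
        intro s t hst
        exact ENNReal.toReal_mono (measure_ne_top _ _)
          (measure_mono (Set.union_subset_union_left _ (Metric.thickening_mono hst _)))
      -- mass bounds on B s
      have hπB1 : ∀ s : ℝ, m/2 ≤ (π (Metric.thickening s A₁ ∪ A₁)).toReal := by
        intro s
        have h1 : m/2 ≤ (π A₁).toReal := by linarith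
        refine le_trans h1 (ENNReal.toReal_mono (measure_ne_top _ _)
          (measure_mono Set.subset_union_right))
      have hπB2 : ∀ s ≤ δ, m/2 ≤ (π (Metric.thickening s A₁ ∪ A₁)ᶜ).toReal := by
        intro s hs
        have h1 : m/2 ≤ (π A₂).toReal := by linarith
        refine le_trans h1 (ENNReal.toReal_mono (measure_ne_top _ _)
          (measure_mono fun z hz hzB => hBdisj s hs z hzB hz))
      set c : ℝ := (1 / Ch) * (m / 2) with hcdef
      -- slope condition
      have Hslope : ∀ s ∈ Set.Ico (0:ℝ) δ, ∀ c' < c,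
          ∀ᶠ r in nhdsWithin 0 (Set.Ioi 0),
            c' < ((π (Metric.thickening (s + r) A₁ ∪ A₁)).toReal -
              (π (Metric.thickening s A₁ ∪ A₁)).toReal) / r := by
        intro s hs c' hc'
        set Bs := Metric.thickening s A₁ ∪ A₁ with hBs
        have hBsm : MeasurableSet Bs :=
          Metric.isOpen_thickening.measurableSet.union hA₁m
        have hiso' := hiso Bs hBsm
        have hminb : m/2 ≤ min (π Bs).toReal (π Bsᶜ).toReal :=
          le_min (hπB1 s) (hπB2 s hs.2.le)
        have hc_le : c ≤ bm Bs := by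
          refine le_trans ?_ hiso'
          rw [hcdef]
          exact mul_le_mul_of_nonneg_left hminb (by positivity)
        rw [hbm] at hc_le
        have hbd0 : ∀ᶠ r in nhdsWithin 0 (Set.Ioi 0),
            (0:ℝ) ≤ ((π (Metric.thickening r Bs)).toReal - (π Bs).toReal) / r := by
          filter_upwards [self_mem_nhdsWithin] with r hr
          have hsub : Bs ⊆ Metric.thickening r Bs := Metric.self_subset_thickening hr _
          have hmo := ENNReal.toReal_mono (measure_ne_top π _) (measure_mono hsub)
          exact div_nonneg (by linarith) (le_of_lt hr)
        have hbdd : Filter.IsBoundedUnder (· ≥ ·) (nhdsWithin 0 (Set.Ioi 0))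
            (fun r => ((π (Metric.thickening r Bs)).toReal - (π Bs).toReal) / r) :=
          Filter.isBoundedUnder_of_eventually_ge hbd0
        have hev := Filter.eventually_lt_of_lt_liminf (lt_of_lt_of_le hc' hc_le) hbdd
        filter_upwards [hev, self_mem_nhdsWithin] with r hr hr0
        refine lt_of_lt_of_le hr ?_
        have hsub2 : Metric.thickening r Bs ⊆ Metric.thickening (s + r) A₁ ∪ A₁ := by
          rw [hBs, Metric.thickening_union]
          apply Set.union_subset
          · refine Set.subset_union_of_subset_left ?_ _
            refine (Metric.thickening_thickening_subset r s A₁).trans ?_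
            rw [add_comm]
          · refine Set.subset_union_of_subset_left ?_ _
            exact Metric.thickening_mono (by linarith [hs.1, hr0.out]) _
        have hnum : (π (Metric.thickening r Bs)).toReal - (π Bs).toReal ≤
            (π (Metric.thickening (s + r) A₁ ∪ A₁)).toReal - (π Bs).toReal := by
          have := ENNReal.toReal_mono (measure_ne_top π _) (measure_mono hsub2)
          linarith
        exact div_le_div_of_nonneg_right hnum hr0.out.le
      have hgrow := growth_of_liminf_slope
        (fun s => (π (Metric.thickening s A₁ ∪ A₁)).toReal) hgmono 0 δ c hδ_pos.le
        (by intro s hs c' hc'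
            filter_upwards [Hslope s hs c' hc'] with r hr
            simpa using hr)
      -- compute g 0 and bound g δ
      have hg0 : (π (Metric.thickening (0:ℝ) A₁ ∪ A₁)).toReal = (π A₁).toReal := by
        rw [Metric.thickening_of_nonpos le_rfl, Set.empty_union]
      have hgδ : (π (Metric.thickening δ A₁ ∪ A₁)).toReal ≤ (π A₂ᶜ).toReal :=
        ENNReal.toReal_mono (measure_ne_top _ _)
          (measure_mono fun z hz hzA₂ => hBdisj δ le_rfl z hz hzA₂)
      have hA₂c : (π A₂ᶜ).toReal = 1 - (π A₂).toReal := by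
        have h1 : π A₂ + π A₂ᶜ = 1 := by rw [measure_add_measure_compl hA₂m, measure_univ]
        have h2 := congrArg ENNReal.toReal h1
        rw [ENNReal.toReal_add (measure_ne_top _ _) (measure_ne_top _ _),
          ENNReal.toReal_one] at h2
        linarith
      -- the key mass inequality
      have hmass : c * δ ≤ 1 - (π A₂).toReal - (π A₁).toReal := by
        have := hgrow
        simp only [sub_zero] at this
        rw [hg0] at this
        linarith [hgδ, hA₂c.symm.le, hA₂c.le]
      -- integral bounds on both sides
      have hkey1 := hlowC (A \ A₁) (hA.diff hA₁m) Set.diff_subset hval1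
      have hkey2 := hlowA (Aᶜ \ A₂) (hA.compl.diff hA₂m) Set.diff_subset hval2
      have hd1 : (π (A \ A₁)).toReal = (π A).toReal - (π A₁).toReal :=
        hdiff A A₁ hA₁m hA₁sub
      have hd2 : (π (Aᶜ \ A₂)).toReal = (π Aᶜ).toReal - (π A₂).toReal :=
        hdiff Aᶜ A₂ hA₂m hA₂sub
      -- conclude
      have hMm : M * m ≤ δ * h / (8 * Ch) * m := mul_le_mul_of_nonneg_right hMδ hm0
      have heq : δ * h / (8 * Ch) * m = h / 2 * (c * δ) / 2 := by
        rw [hcdef]; field_simp; ring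
      rw [hd1] at hkey1
      rw [hd2, ← hexch] at hkey2
      have e1 : h/2 * (c * δ) ≤ h/2 * (1 - (π A₂).toReal - (π A₁).toReal) :=
        mul_le_mul_of_nonneg_left hmass (by linarith)
      have e2 : h/2 * (1 - (π A₂).toReal - (π A₁).toReal) =
          h/2 * ((π A).toReal - (π A₁).toReal) + h/2 * ((π Aᶜ).toReal - (π A₂).toReal) := by
        linear_combination (-(h/2)) * honeR
      linarith
end

section
/- Let π be a probability density on ℝ^d and let P be the Random Walk Metropolis kernel for π with Gaussian proposal N(x, σ²I_d), and let α₀ = inf_{x∈ℝ^d} α(x) > 0 be the infimum of the acceptance rate. Then for all x, y ∈ ℝ^d with ‖x − y‖ ≤ α₀·σ, the total variation distance satisfies d_TV(P(x,·), P(y,·)) ≤ 1 − α₀/2. -/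
open MeasureTheory

section RwmAux
open Real Set


lemma rwm_aux_integrable_gauss {V : Type*} [NormedAddCommGroup V] [InnerProductSpace ℝ V]
    [FiniteDimensional ℝ V] [MeasurableSpace V] [BorelSpace V] {b : ℝ} (hb : 0 < b) :
    Integrable (fun v : V => Real.exp (-b * ‖v‖^2)) := by
  have h := (GaussianFourier.integrable_cexp_neg_mul_sq_norm_add
    (b := (b:ℂ)) (by simpa using hb) 0 (0:V)).norm
  simpa [Complex.norm_exp, ← Complex.ofReal_pow] using h

-- 1D gaussian normalization
lemma rwm_oneD_total (σ a : ℝ) (hσ : 0 < σ) :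
    ∫ t : ℝ, (2*π*σ^2)^(-(1:ℝ)/2) * rexp (-(t-a)^2/(2*σ^2)) = 1 := by
  have h0 : (0:ℝ) < 2*π*σ^2 := by positivity
  have h1 : ∫ t : ℝ, (2*π*σ^2)^(-(1:ℝ)/2) * rexp (-(t-a)^2/(2*σ^2))
      = ∫ t : ℝ, (2*π*σ^2)^(-(1:ℝ)/2) * rexp (-t^2/(2*σ^2)) :=
    integral_sub_right_eq_self (fun t => (2*π*σ^2)^(-(1:ℝ)/2) * rexp (-t^2/(2*σ^2))) a
  rw [h1, integral_const_mul]
  have h2 : ∫ t : ℝ, rexp (-t^2/(2*σ^2)) = Real.sqrt (π / (1/(2*σ^2))) := by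
    rw [← integral_gaussian (1/(2*σ^2))]
    congr 1; ext t; ring_nf
  rw [h2]
  have h3 : π / (1/(2*σ^2)) = 2*π*σ^2 := by field_simp
  rw [h3, Real.sqrt_eq_rpow, ← Real.rpow_add h0]
  norm_num


lemma rwm_shift_Ioi (f : ℝ → ℝ) (m a : ℝ) : ∫ t in Ioi m, f (t - a) = ∫ t in Ioi (m - a), f t := by
  rw [← integral_indicator measurableSet_Ioi, ← integral_indicator measurableSet_Ioi]
  rw [← integral_sub_right_eq_self (fun t => (Ioi (m-a)).indicator f t) a]
  congr 1; ext t
  simp only [indicator]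
  by_cases h : t ∈ Ioi m
  · rw [if_pos h, if_pos (by simpa [sub_lt_sub_iff_right] using h)]
  · rw [if_neg h, if_neg (by simp only [mem_Ioi] at *; intro hc; exact h (by linarith))]

lemma rwm_oneD (σ a b : ℝ) (hσ : 0 < σ) (hba : b ≤ a) :
    ∫ t : ℝ, max ((2*π*σ^2)^(-(1:ℝ)/2) * rexp (-(t-a)^2/(2*σ^2))
      - (2*π*σ^2)^(-(1:ℝ)/2) * rexp (-(t-b)^2/(2*σ^2))) 0
      ≤ (a - b) * (2*π*σ^2)^(-(1:ℝ)/2) := by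
  set c : ℝ := (2*π*σ^2)^(-(1:ℝ)/2) with hc
  have hc0 : 0 < c := by positivity
  set G : ℝ → ℝ := fun t => c * rexp (-t^2/(2*σ^2)) with hG
  have hGle : ∀ t, G t ≤ c := by
    intro t
    have h1 : rexp (-t^2/(2*σ^2)) ≤ 1 := by
      rw [exp_le_one_iff, neg_div]
      have : (0:ℝ) ≤ t^2/(2*σ^2) := by positivity
      linarith
    calc c * rexp (-t^2/(2*σ^2)) ≤ c * 1 := by nlinarith
    _ = c := mul_one c
  have hGnn : ∀ t, 0 ≤ G t := fun t => by positivity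
  have hGint : Integrable G := by
    have := integrable_exp_neg_mul_sq (b := 1/(2*σ^2)) (by positivity)
    have h2 : (fun t : ℝ => rexp (-(1/(2*σ^2)) * t^2)) = fun t => rexp (-t^2/(2*σ^2)) := by
      ext t; ring_nf
    rw [h2] at this
    exact this.const_mul c
  set m : ℝ := (a+b)/2 with hm
  have hpt : ∀ t : ℝ, max (G (t-a) - G (t-b)) 0
      = (Ioi m).indicator (fun t => G (t-a) - G (t-b)) t := by
    intro t
    by_cases h : t ∈ Ioi m
    · rw [indicator_of_mem h, max_eq_left]
      simp only [mem_Ioi, hm] at h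
      have : rexp (-(t-b)^2/(2*σ^2)) ≤ rexp (-(t-a)^2/(2*σ^2)) := by
        apply exp_le_exp.2
        apply (div_le_div_iff_of_pos_right (by positivity)).2
        nlinarith
      simp only [hG]; nlinarith
    · rw [indicator_of_notMem h, max_eq_right]
      simp only [mem_Ioi, not_lt, hm] at h
      have : rexp (-(t-a)^2/(2*σ^2)) ≤ rexp (-(t-b)^2/(2*σ^2)) := by
        apply exp_le_exp.2
        apply (div_le_div_iff_of_pos_right (by positivity)).2
        nlinarith
      simp only [hG]; nlinarith
  calc ∫ t : ℝ, max (G (t-a) - G (t-b)) 0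
      = ∫ t : ℝ, (Ioi m).indicator (fun t => G (t-a) - G (t-b)) t := by
        congr 1; ext t; exact hpt t
    _ = ∫ t in Ioi m, (G (t-a) - G (t-b)) := integral_indicator measurableSet_Ioi
    _ = (∫ t in Ioi m, G (t-a)) - ∫ t in Ioi m, G (t-b) := by
        apply integral_sub
        · exact (hGint.comp_sub_right a).integrableOn
        · exact (hGint.comp_sub_right b).integrableOn
    _ = (∫ t in Ioi (m-a), G t) - ∫ t in Ioi (m-b), G t := by
        rw [rwm_shift_Ioi, rwm_shift_Ioi]
    _ = ∫ t in Ioc (m-a) (m-b), G t := by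
        rw [← Ioc_union_Ioi_eq_Ioi (show m-a ≤ m-b by linarith)]
        rw [setIntegral_union (Ioc_disjoint_Ioi le_rfl) measurableSet_Ioi
          hGint.integrableOn hGint.integrableOn]
        ring
    _ ≤ (a - b) * c := by
        have h1 : ∫ t in Ioc (m-a) (m-b), G t ≤ ∫ t in Ioc (m-a) (m-b), c := by
          apply setIntegral_mono_on (hGint.integrableOn) (integrableOn_const (by simp))
            measurableSet_Ioc (fun t _ => hGle t)
        have h2 : ∫ t in Ioc (m-a) (m-b), (c:ℝ) = (a - b) * c := by
          rw [setIntegral_const, smul_eq_mul, measureReal_def, Real.volume_Ioc,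
            ENNReal.toReal_ofReal (by linarith), show m - b - (m - a) = a - b by ring]
        linarith

lemma rwm_gaussTV (d : ℕ) (σ : ℝ) (hσ : 0 < σ) (x y : EuclideanSpace ℝ (Fin d)) :
    ∫ z : EuclideanSpace ℝ (Fin d),
      max ((2*π*σ^2)^(-(d:ℝ)/2) * rexp (-‖z - x‖^2/(2*σ^2))
         - (2*π*σ^2)^(-(d:ℝ)/2) * rexp (-‖z - y‖^2/(2*σ^2))) 0
      ≤ ‖x - y‖ * (2*π*σ^2)^(-(1:ℝ)/2) := by
  by_cases hxy : x = y
  · subst hxy; simp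
  have h0 : (0:ℝ) < 2*π*σ^2 := by positivity
  set Δ : ℝ := ‖x - y‖ with hΔdef
  have hΔ : 0 < Δ := by
    rw [hΔdef, norm_pos_iff, sub_ne_zero]; exact hxy
  have hd : 0 < d := by
    rcases Nat.eq_zero_or_pos d with h | h
    · exfalso; apply hxy; subst h; exact PiLp.ext fun i => Fin.elim0 i
    · exact h
  set i0 : Fin d := ⟨0, hd⟩ with hi0
  set u : EuclideanSpace ℝ (Fin d) := Δ⁻¹ • (x - y) with hu_def
  have hu : ‖u‖ = 1 := by
    rw [hu_def, norm_smul, norm_inv, Real.norm_eq_abs, abs_of_pos hΔ, ← hΔdef,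
      inv_mul_cancel₀ hΔ.ne']
  -- orthonormal basis with b i0 = u
  have hcard : Module.finrank ℝ (EuclideanSpace ℝ (Fin d)) = Fintype.card (Fin d) := by
    simp [finrank_euclideanSpace]
  have horth : Orthonormal ℝ (({i0} : Set (Fin d)).restrict (fun _ => u)) := by
    rw [orthonormal_iff_ite]
    intro i j
    have hij : i = j := Subtype.ext (i.2.trans j.2.symm)
    subst hij
    rw [if_pos rfl]
    rw [real_inner_self_eq_norm_sq]; change ‖u‖ ^ 2 = 1; rw [hu]; norm_num
  obtain ⟨b, hb⟩ := horth.exists_orthonormalBasis_extension_of_card_eq hcard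
  have hb0 : b i0 = u := hb i0 rfl
  set p := b.repr x with hp
  set q := b.repr y with hq
  have hpq : p - q = Δ • EuclideanSpace.single i0 (1:ℝ) := by
    rw [hp, hq, ← map_sub]
    have hxyΔ : x - y = Δ • u := by
      rw [hu_def, smul_smul, mul_inv_cancel₀ hΔ.ne', one_smul]
    rw [hxyΔ, _root_.map_smul]
    congr 1
    rw [← hb0, b.repr_self]
  have hq_eq : ∀ i, q i = p i - Δ * (EuclideanSpace.single i0 (1:ℝ)) i := by
    intro i
    have := congrFun (congrArg (fun v : EuclideanSpace ℝ (Fin d) => (v : Fin d → ℝ)) hpq) i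
    simp only [PiLp.sub_apply, PiLp.smul_apply, smul_eq_mul] at this
    linarith
  have hq0 : q i0 = p i0 - Δ := by
    have := hq_eq i0
    rwa [EuclideanSpace.single_apply, if_pos rfl, mul_one] at this
  have hqne : ∀ i, i ≠ i0 → q i = p i := by
    intro i hi
    rw [hq_eq i, EuclideanSpace.single_apply, if_neg hi, mul_zero, sub_zero]
  -- constants
  set c : ℝ := (2*π*σ^2)^(-(1:ℝ)/2) with hc
  have hc0 : 0 < c := by positivity
  set G : ℝ → ℝ := fun t => c * rexp (-t^2/(2*σ^2)) with hG
  have hGnn : ∀ t, 0 ≤ G t := fun t => by positivity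
  have hCc : (2*π*σ^2)^(-(d:ℝ)/2) = c ^ d := by
    rw [hc, ← Real.rpow_natCast ((2*π*σ^2)^(-(1:ℝ)/2)) d, ← Real.rpow_mul h0.le]
    congr 1; ring
  -- step 1: transfer by the isometry b.repr.symm
  have step1 : ∫ z : EuclideanSpace ℝ (Fin d),
      max ((2*π*σ^2)^(-(d:ℝ)/2) * rexp (-‖z - x‖^2/(2*σ^2))
         - (2*π*σ^2)^(-(d:ℝ)/2) * rexp (-‖z - y‖^2/(2*σ^2))) 0
      = ∫ w : EuclideanSpace ℝ (Fin d),
      max ((2*π*σ^2)^(-(d:ℝ)/2) * rexp (-‖w - p‖^2/(2*σ^2))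
         - (2*π*σ^2)^(-(d:ℝ)/2) * rexp (-‖w - q‖^2/(2*σ^2))) 0 := by
    rw [← (b.measurePreserving_repr_symm).integral_comp
      (b.repr.symm.toHomeomorph.measurableEmbedding) _]
    congr 1; ext w
    have e1 : ‖b.repr.symm w - x‖ = ‖w - p‖ := by
      rw [hp, show b.repr.symm w - x = b.repr.symm (w - b.repr x) by
        rw [map_sub, b.repr.symm_apply_apply], b.repr.symm.norm_map]
    have e2 : ‖b.repr.symm w - y‖ = ‖w - q‖ := by
      rw [hq, show b.repr.symm w - y = b.repr.symm (w - b.repr y) by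
        rw [map_sub, b.repr.symm_apply_apply], b.repr.symm.norm_map]
    rw [e1, e2]
  rw [step1]
  -- step 2: transfer to pi space
  have step2 : ∫ w : EuclideanSpace ℝ (Fin d),
      max ((2*π*σ^2)^(-(d:ℝ)/2) * rexp (-‖w - p‖^2/(2*σ^2))
         - (2*π*σ^2)^(-(d:ℝ)/2) * rexp (-‖w - q‖^2/(2*σ^2))) 0
      = ∫ v : Fin d → ℝ,
      max ((2*π*σ^2)^(-(d:ℝ)/2) * rexp (-(∑ i, (v i - p i)^2)/(2*σ^2))
         - (2*π*σ^2)^(-(d:ℝ)/2) * rexp (-(∑ i, (v i - q i)^2)/(2*σ^2))) 0 := by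
    rw [← ((EuclideanSpace.volume_preserving_symm_measurableEquiv_toLp (Fin d))).integral_comp
      (MeasurableEquiv.measurableEmbedding _) _]
    congr 1; ext w
    have hnorm : ∀ r : EuclideanSpace ℝ (Fin d),
        ‖w - r‖^2 = ∑ i, ((MeasurableEquiv.toLp 2 (Fin d → ℝ)).symm w i - r i)^2 := by
      intro r
      rw [EuclideanSpace.norm_eq, Real.sq_sqrt (by positivity)]
      congr 1; ext i
      simp only [Real.norm_eq_abs, sq_abs, PiLp.sub_apply]
      rfl
    rw [hnorm p, hnorm q]
  rw [step2]
  -- step 3: pointwise product form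
  classical
  set f : Fin d → ℝ → ℝ := fun i t =>
    if i = i0 then max (G (t - p i0) - G (t - q i0)) 0 else G (t - p i) with hf
  have prod_form : ∀ r : EuclideanSpace ℝ (Fin d), ∀ v : Fin d → ℝ,
      (2*π*σ^2)^(-(d:ℝ)/2) * rexp (-(∑ i, (v i - r i)^2)/(2*σ^2))
        = ∏ i, G (v i - r i) := by
    intro r v
    rw [hCc]
    have : rexp (-(∑ i, (v i - r i)^2)/(2*σ^2)) = ∏ i, rexp (-(v i - r i)^2/(2*σ^2)) := by
      rw [← Real.exp_sum]
      congr 1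
      rw [← Finset.sum_div, ← Finset.sum_neg_distrib]
    rw [this, Finset.prod_mul_distrib, Finset.prod_const, Finset.card_univ, Fintype.card_fin]
  have step3 : ∀ v : Fin d → ℝ,
      max ((2*π*σ^2)^(-(d:ℝ)/2) * rexp (-(∑ i, (v i - p i)^2)/(2*σ^2))
         - (2*π*σ^2)^(-(d:ℝ)/2) * rexp (-(∑ i, (v i - q i)^2)/(2*σ^2))) 0
      = ∏ i, f i (v i) := by
    intro v
    rw [prod_form p v, prod_form q v]
    rw [← Finset.mul_prod_erase Finset.univ (fun i => G (v i - p i)) (Finset.mem_univ i0),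
        ← Finset.mul_prod_erase Finset.univ (fun i => G (v i - q i)) (Finset.mem_univ i0),
        ← Finset.mul_prod_erase Finset.univ (fun i => f i (v i)) (Finset.mem_univ i0)]
    have hqprod : ∏ i ∈ Finset.univ.erase i0, G (v i - q i)
        = ∏ i ∈ Finset.univ.erase i0, G (v i - p i) := by
      apply Finset.prod_congr rfl
      intro i hi
      rw [hqne i (Finset.mem_erase.1 hi).1]
    have hfprod : ∏ i ∈ Finset.univ.erase i0, f i (v i)
        = ∏ i ∈ Finset.univ.erase i0, G (v i - p i) := by
      apply Finset.prod_congr rfl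
      intro i hi
      rw [hf]; simp only []
      rw [if_neg (Finset.mem_erase.1 hi).1]
    rw [hqprod, hfprod]
    have hS : 0 ≤ ∏ i ∈ Finset.univ.erase i0, G (v i - p i) :=
      Finset.prod_nonneg (fun i _ => hGnn _)
    have hfi0 : f i0 (v i0) = max (G (v i0 - p i0) - G (v i0 - q i0)) 0 := by
      simp only [hf, if_true]
    rw [hfi0, ← sub_mul, max_mul_of_nonneg _ _ hS, zero_mul]
  rw [integral_congr_ae (Filter.Eventually.of_forall step3)]
  -- step 4: Fubini
  rw [MeasureTheory.integral_fintype_prod_volume_eq_prod f]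
  rw [← Finset.mul_prod_erase Finset.univ (fun i => ∫ t, f i t) (Finset.mem_univ i0)]
  have hother : ∏ i ∈ Finset.univ.erase i0, (∫ t, f i t) = 1 := by
    apply Finset.prod_eq_one
    intro i hi
    rw [hf]; simp only [if_neg (Finset.mem_erase.1 hi).1]
    exact rwm_oneD_total σ (p i) hσ
  have hfi0 : (∫ t, f i0 t) = ∫ t, max (G (t - p i0) - G (t - q i0)) 0 := by
    simp only [hf, if_true]
  rw [hother, mul_one, hfi0]
  have := rwm_oneD σ (p i0) (q i0) hσ (by rw [hq0]; linarith)
  calc (∫ t, max (G (t - p i0) - G (t - q i0)) 0) ≤ (p i0 - q i0) * c := this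
    _ = Δ * c := by rw [hq0]; ring

end RwmAux

/-- **One-step overlap property of the RWM kernel (Lemma 2.4).**
Let `π` be a probability density on `ℝ^d` and let `P` be the Random Walk Metropolis
kernel for `π` with Gaussian proposal `N(x, σ²I_d)`, with `α₀ = inf_x α(x) > 0` the
infimum of the acceptance rate.  Then for all `x, y` with `‖x − y‖ ≤ α₀·σ`, the total
variation distance satisfies `d_TV(P(x,·), P(y,·)) ≤ 1 − α₀/2`, i.e.
`|P(x, A) − P(y, A)| ≤ 1 − α₀/2` for every Borel set `A`. -/
theorem rwm_one_step_overlap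
    (d : ℕ)
    (π : EuclideanSpace ℝ (Fin d) → ℝ)
    (hπ_meas : Measurable π)
    (hπ_nonneg : ∀ x, 0 ≤ π x)
    (hπ_prob : ∫ x, π x = 1)
    (σ : ℝ) (hσ : 0 < σ)
    -- the density of the Gaussian proposal increment `N(0, σ²I_d)`
    (φ : EuclideanSpace ℝ (Fin d) → ℝ)
    (hφ : ∀ z, φ z = (2 * Real.pi * σ ^ 2) ^ (-(d : ℝ) / 2) *
      Real.exp (-‖z‖ ^ 2 / (2 * σ ^ 2)))
    -- the acceptance rate `α(x)` and its infimum `α₀ > 0`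
    (α : EuclideanSpace ℝ (Fin d) → ℝ)
    (hα : ∀ x, α x = ∫ y, min 1 (π y / π x) * φ (y - x))
    (α₀ : ℝ) (hα₀ : α₀ = sInf (Set.range α)) (hα₀_pos : 0 < α₀)
    -- the Random Walk Metropolis kernel
    (P : EuclideanSpace ℝ (Fin d) → Set (EuclideanSpace ℝ (Fin d)) → ℝ)
    (hP : ∀ x A, P x A = (∫ y in A, min 1 (π y / π x) * φ (y - x)) +
      (1 - α x) * Set.indicator A (fun _ => (1 : ℝ)) x) :
    ∀ x y : EuclideanSpace ℝ (Fin d), ‖x - y‖ ≤ α₀ * σ →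
      ∀ A : Set (EuclideanSpace ℝ (Fin d)), MeasurableSet A →
        |P x A - P y A| ≤ 1 - α₀ / 2 := by
  have h2σ : (0:ℝ) < 2 * σ ^ 2 := by positivity
  have hφ_fun : φ = fun z => (2 * Real.pi * σ ^ 2) ^ (-(d : ℝ) / 2) *
      Real.exp (-‖z‖ ^ 2 / (2 * σ ^ 2)) := funext hφ
  have hφ_nonneg : ∀ z, 0 ≤ φ z := by
    intro z; rw [hφ]; positivity
  have hφ_cont : Continuous φ := by
    rw [hφ_fun]
    exact continuous_const.mul (((continuous_norm.pow 2).neg.div_const _).rexp)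
  have hφ_meas : Measurable φ := hφ_cont.measurable
  have hφ_int : Integrable φ := by
    have h := (rwm_aux_integrable_gauss (V := EuclideanSpace ℝ (Fin d))
      (b := 1/(2*σ^2)) (by positivity)).const_mul ((2 * Real.pi * σ ^ 2) ^ (-(d : ℝ) / 2))
    rw [hφ_fun]
    convert h using 2 with z
    ring_nf
  have hφx_int : ∀ x : EuclideanSpace ℝ (Fin d), Integrable (fun z => φ (z - x)) :=
    fun x => hφ_int.comp_sub_right x
  have hφ_total : ∀ x : EuclideanSpace ℝ (Fin d), ∫ z, φ (z - x) = 1 := by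
    intro x
    rw [integral_sub_right_eq_self φ x, hφ_fun, integral_const_mul]
    have hb : (0:ℝ) < 1/(2*σ^2) := by positivity
    have h := GaussianFourier.integral_rexp_neg_mul_sq_norm (V := EuclideanSpace ℝ (Fin d)) hb
    have heq : ∫ z : EuclideanSpace ℝ (Fin d), Real.exp (-‖z‖^2/(2*σ^2))
        = ∫ z : EuclideanSpace ℝ (Fin d), Real.exp (-(1/(2*σ^2)) * ‖z‖^2) := by
      congr 1; ext z; ring_nf
    rw [heq, h, finrank_euclideanSpace_fin]
    have : Real.pi / (1/(2*σ^2)) = 2 * Real.pi * σ^2 := by field_simp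
    rw [this, ← Real.rpow_add (by positivity),
      show -(d:ℝ)/2 + (d:ℝ)/2 = 0 by ring, Real.rpow_zero]
  -- measurability of the sub-kernel densities
  have hmeas : ∀ w x' : EuclideanSpace ℝ (Fin d),
      Measurable (fun z => min 1 (π z / π w) * φ (z - x')) := by
    intro w x'
    exact ((measurable_const.min (hπ_meas.div_const (π w))).mul
      (hφ_meas.comp (measurable_id.sub_const x')))
  have hm_nonneg : ∀ w z : EuclideanSpace ℝ (Fin d), 0 ≤ min 1 (π z / π w) := by
    intro w z
    exact le_min zero_le_one (div_nonneg (hπ_nonneg z) (hπ_nonneg w))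
  have hm_le_one : ∀ w z : EuclideanSpace ℝ (Fin d), min 1 (π z / π w) ≤ 1 :=
    fun w z => min_le_left _ _
  have hmint : ∀ w x' : EuclideanSpace ℝ (Fin d),
      Integrable (fun z => min 1 (π z / π w) * φ (z - x')) := by
    intro w x'
    apply Integrable.mono' (hφx_int x') (hmeas w x').aestronglyMeasurable
    apply Filter.Eventually.of_forall
    intro z
    rw [Real.norm_eq_abs, abs_of_nonneg (mul_nonneg (hm_nonneg w z) (hφ_nonneg _))]
    calc min 1 (π z / π w) * φ (z - x') ≤ 1 * φ (z - x') :=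
      mul_le_mul_of_nonneg_right (hm_le_one w z) (hφ_nonneg _)
    _ = φ (z - x') := one_mul _
  have hα_nonneg : ∀ w, 0 ≤ α w := by
    intro w; rw [hα]
    exact integral_nonneg (fun z => mul_nonneg (hm_nonneg w z) (hφ_nonneg _))
  have hα_le_one : ∀ w, α w ≤ 1 := by
    intro w; rw [hα]
    refine le_trans (integral_mono (hmint w w) (hφx_int w) ?_) (le_of_eq (hφ_total w))
    intro z
    calc min 1 (π z / π w) * φ (z - w) ≤ 1 * φ (z - w) :=
      mul_le_mul_of_nonneg_right (hm_le_one w z) (hφ_nonneg _)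
    _ = φ (z - w) := one_mul _
  have hbdd : BddBelow (Set.range α) := by
    refine ⟨0, ?_⟩
    rintro v ⟨w, rfl⟩
    exact hα_nonneg w
  have hα₀_le : ∀ w, α₀ ≤ α w := by
    intro w; rw [hα₀]
    exact csInf_le hbdd (Set.mem_range_self w)
  have hπ_pos : ∀ w, 0 < π w := by
    intro w
    rcases (hπ_nonneg w).lt_or_eq with h | h
    · exact h
    · exfalso
      have hz : ∀ z : EuclideanSpace ℝ (Fin d),
          min 1 (π z / π w) * φ (z - w) = 0 := by
        intro z; rw [← h, div_zero, min_eq_right zero_le_one, zero_mul]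
      have hzero : α w = 0 := by
        rw [hα]
        simp only [hz]
        exact integral_zero _ _
      linarith [hα₀_le w, hα₀_pos]
  -- the constant c
  set c : ℝ := (2*Real.pi*σ^2)^(-(1:ℝ)/2) with hc
  have hc0 : 0 < c := by positivity
  have hσc : σ * c ≤ 1/2 := by
    have h4 : (0:ℝ) < 4 * σ^2 := by positivity
    have hle : (4:ℝ) * σ^2 ≤ 2*Real.pi*σ^2 := by nlinarith [Real.pi_gt_three]
    have h1 : c ≤ (4*σ^2)^(-(1:ℝ)/2) := Real.rpow_le_rpow_of_nonpos h4 hle (by norm_num)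
    have h2 : ((4:ℝ)*σ^2)^(-(1:ℝ)/2) = (2*σ)⁻¹ := by
      rw [show (4:ℝ)*σ^2 = (2*σ)^(2:ℕ) by ring, ← Real.rpow_natCast (2*σ) 2,
        ← Real.rpow_mul (by positivity), show ((2:ℕ):ℝ) * (-(1:ℝ)/2) = -1 by norm_num,
        Real.rpow_neg_one]
    have h3 : σ * c ≤ σ * (2*σ)⁻¹ := by
      apply mul_le_mul_of_nonneg_left (h1.trans h2.le) hσ.le
    calc σ * c ≤ σ * (2*σ)⁻¹ := h3
    _ = 1/2 := by field_simp
  -- the key overlap lower bound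
  have key : ∀ x y : EuclideanSpace ℝ (Fin d), ‖x - y‖ ≤ α₀ * σ → π y ≤ π x →
      α₀/2 ≤ ∫ z, min (min 1 (π z / π x) * φ (z - x)) (min 1 (π z / π y) * φ (z - y)) := by
    intro x y hxy hyx
    have hm_mono : ∀ z, min 1 (π z / π x) ≤ min 1 (π z / π y) := by
      intro z
      exact min_le_min le_rfl (div_le_div_of_nonneg_left (hπ_nonneg z) (hπ_pos y) hyx)
    have hpt : ∀ z, min 1 (π z / π x) * φ (z - x) - max (φ (z - x) - φ (z - y)) 0
        ≤ min (min 1 (π z / π x) * φ (z - x)) (min 1 (π z / π y) * φ (z - y)) := by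
      intro z
      rcases le_total (φ (z - x)) (φ (z - y)) with h | h
      · rw [max_eq_right (by linarith), sub_zero]
        apply le_min le_rfl
        exact mul_le_mul (hm_mono z) h (hφ_nonneg _) (hm_nonneg y z)
      · rw [max_eq_left (by linarith)]
        apply le_min (by linarith [hφ_nonneg (z - y)])
        nlinarith [hm_le_one x z, hm_nonneg x z, hm_mono z, hφ_nonneg (z - y),
          mul_le_mul_of_nonneg_right (hm_mono z) (hφ_nonneg (z - y))]
    have hmax_int : Integrable (fun z => max (φ (z - x) - φ (z - y)) 0) := by
      have := ((hφx_int x).sub (hφx_int y)).pos_part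
      simpa using this
    have hg_meas : Measurable (fun z =>
        min (min 1 (π z / π x) * φ (z - x)) (min 1 (π z / π y) * φ (z - y))) :=
      (hmeas x x).min (hmeas y y)
    have hg_nonneg : ∀ z, 0 ≤ min (min 1 (π z / π x) * φ (z - x))
        (min 1 (π z / π y) * φ (z - y)) :=
      fun z => le_min (mul_nonneg (hm_nonneg x z) (hφ_nonneg _))
        (mul_nonneg (hm_nonneg y z) (hφ_nonneg _))
    have hg_int : Integrable (fun z =>
        min (min 1 (π z / π x) * φ (z - x)) (min 1 (π z / π y) * φ (z - y))) := by
      apply Integrable.mono' (hφx_int x) hg_meas.aestronglyMeasurable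
      apply Filter.Eventually.of_forall
      intro z
      rw [Real.norm_eq_abs, abs_of_nonneg (hg_nonneg z)]
      calc min (min 1 (π z / π x) * φ (z - x)) (min 1 (π z / π y) * φ (z - y))
          ≤ min 1 (π z / π x) * φ (z - x) := min_le_left _ _
        _ ≤ 1 * φ (z - x) := mul_le_mul_of_nonneg_right (hm_le_one x z) (hφ_nonneg _)
        _ = φ (z - x) := one_mul _
    have hTbound : (∫ z, max (φ (z - x) - φ (z - y)) 0) ≤ α₀/2 := by
      have hTV : (∫ z, max (φ (z - x) - φ (z - y)) 0) ≤ ‖x - y‖ * c := by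
        have h := rwm_gaussTV d σ hσ x y
        have heq : (∫ z, max (φ (z - x) - φ (z - y)) 0)
            = ∫ z : EuclideanSpace ℝ (Fin d),
              max ((2*Real.pi*σ^2)^(-(d:ℝ)/2) * Real.exp (-‖z - x‖^2/(2*σ^2))
                - (2*Real.pi*σ^2)^(-(d:ℝ)/2) * Real.exp (-‖z - y‖^2/(2*σ^2))) 0 := by
          congr 1; ext z; rw [hφ, hφ]
        rw [heq]; exact h
      calc (∫ z, max (φ (z - x) - φ (z - y)) 0) ≤ ‖x - y‖ * c := hTV
        _ ≤ (α₀ * σ) * c := mul_le_mul_of_nonneg_right hxy hc0.le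
        _ = α₀ * (σ * c) := by ring
        _ ≤ α₀ * (1/2) := mul_le_mul_of_nonneg_left hσc hα₀_pos.le
        _ = α₀/2 := by ring
    have hstep : α x - (∫ z, max (φ (z - x) - φ (z - y)) 0)
        ≤ ∫ z, min (min 1 (π z / π x) * φ (z - x)) (min 1 (π z / π y) * φ (z - y)) := by
      have := integral_mono ((hmint x x).sub hmax_int) hg_int hpt
      simp only [Pi.sub_apply] at this
      rw [integral_sub (hmint x x) hmax_int] at this
      rw [hα]
      exact this
    linarith [hα₀_le x, hTbound, hstep]
  -- main bound on P differences
  intro x y hxy A hA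
  have hind : ∀ w : EuclideanSpace ℝ (Fin d),
      0 ≤ Set.indicator A (fun _ => (1:ℝ)) w ∧ Set.indicator A (fun _ => (1:ℝ)) w ≤ 1 := by
    intro w
    by_cases hw : w ∈ A
    · rw [Set.indicator_of_mem hw]; norm_num
    · rw [Set.indicator_of_notMem hw]; norm_num
  have main : ∀ x' y' : EuclideanSpace ℝ (Fin d),
      P x' A - P y' A ≤ 1 - ∫ z, min (min 1 (π z / π x') * φ (z - x'))
        (min 1 (π z / π y') * φ (z - y')) := by
    intro x' y'
    set g : EuclideanSpace ℝ (Fin d) → ℝ := fun z =>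
      min (min 1 (π z / π x') * φ (z - x')) (min 1 (π z / π y') * φ (z - y')) with hg
    have hg_meas : Measurable g := (hmeas x' x').min (hmeas y' y')
    have hg_nonneg : ∀ z, 0 ≤ g z :=
      fun z => le_min (mul_nonneg (hm_nonneg x' z) (hφ_nonneg _))
        (mul_nonneg (hm_nonneg y' z) (hφ_nonneg _))
    have hg_int : Integrable g := by
      apply Integrable.mono' (hφx_int x') hg_meas.aestronglyMeasurable
      apply Filter.Eventually.of_forall
      intro z
      rw [Real.norm_eq_abs, abs_of_nonneg (hg_nonneg z)]
      calc g z ≤ min 1 (π z / π x') * φ (z - x') := min_le_left _ _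
        _ ≤ 1 * φ (z - x') := mul_le_mul_of_nonneg_right (hm_le_one x' z) (hφ_nonneg _)
        _ = φ (z - x') := one_mul _
    have hsplitx : (∫ z in A, min 1 (π z / π x') * φ (z - x'))
        + (∫ z in Aᶜ, min 1 (π z / π x') * φ (z - x')) = α x' := by
      rw [hα]; exact integral_add_compl hA (hmint x' x')
    have hsplitg : (∫ z in A, g z) + (∫ z in Aᶜ, g z) = ∫ z, g z :=
      integral_add_compl hA hg_int
    have h1 : P x' A ≤ 1 - ∫ z in Aᶜ, min 1 (π z / π x') * φ (z - x') := by
      rw [hP]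
      have h2 : (1 - α x') * Set.indicator A (fun _ => (1:ℝ)) x' ≤ 1 - α x' := by
        calc (1 - α x') * Set.indicator A (fun _ => (1:ℝ)) x' ≤ (1 - α x') * 1 :=
          mul_le_mul_of_nonneg_left (hind x').2 (by linarith [hα_le_one x'])
        _ = 1 - α x' := mul_one _
      linarith
    have h3 : ∫ z in A, min 1 (π z / π y') * φ (z - y') ≤ P y' A := by
      rw [hP]
      have h4 : 0 ≤ (1 - α y') * Set.indicator A (fun _ => (1:ℝ)) y' :=
        mul_nonneg (by linarith [hα_le_one y']) (hind y').1
      linarith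
    have h5 : (∫ z in Aᶜ, g z) ≤ ∫ z in Aᶜ, min 1 (π z / π x') * φ (z - x') := by
      apply setIntegral_mono_on hg_int.integrableOn (hmint x' x').integrableOn hA.compl
      intro z _
      exact min_le_left _ _
    have h6 : (∫ z in A, g z) ≤ ∫ z in A, min 1 (π z / π y') * φ (z - y') := by
      apply setIntegral_mono_on hg_int.integrableOn (hmint y' y').integrableOn hA
      intro z _
      exact min_le_right _ _
    linarith
  have hcomm : (∫ z, min (min 1 (π z / π y) * φ (z - y)) (min 1 (π z / π x) * φ (z - x)))
      = ∫ z, min (min 1 (π z / π x) * φ (z - x)) (min 1 (π z / π y) * φ (z - y)) := by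
    congr 1; ext z; rw [min_comm]
  have hIg : α₀/2 ≤ ∫ z, min (min 1 (π z / π x) * φ (z - x))
      (min 1 (π z / π y) * φ (z - y)) := by
    rcases le_total (π y) (π x) with h | h
    · exact key x y hxy h
    · rw [← hcomm]
      exact key y x (by rwa [norm_sub_rev]) h
  rw [abs_sub_le_iff]
  constructor
  · linarith [main x y]
  · linarith [main y x, hcomm]
end

section
/- Let π be a probability density on ℝ^d and let P be the Random Walk Metropolis kernel for π with Gaussian proposal N(x, σ²I_d). Then P is a positive operator on L²(π): for every f ∈ L²(π), ⟨f, Pf⟩_π = ∫∫ f(x) f(y) π(dx) P(x, dy) ≥ 0. -/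
open MeasureTheory

namespace RWMAux

open Real

variable {d : ℕ} {σ : ℝ}

noncomputable def gψ (d : ℕ) (σ : ℝ) (z : EuclideanSpace ℝ (Fin d)) : ℝ :=
  (π * σ ^ 2) ^ (-(d : ℝ) / 2) * rexp (-‖z‖ ^ 2 / σ ^ 2)

lemma gauss_integrable {b : ℝ} (hb : 0 < b) :
    Integrable (fun z : EuclideanSpace ℝ (Fin d) => rexp (-b * ‖z‖ ^ 2)) := by
  have h := (GaussianFourier.integrable_cexp_neg_mul_sq_norm_add
    (b := (b : ℂ)) (by simpa using hb) 0 (0 : EuclideanSpace ℝ (Fin d))).norm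
  refine h.congr (Filter.Eventually.of_forall fun z => ?_)
  simp [Complex.norm_exp]
  left; norm_cast

lemma gauss_integral {b : ℝ} (hb : 0 < b) :
    ∫ z : EuclideanSpace ℝ (Fin d), rexp (-b * ‖z‖ ^ 2) = (π / b) ^ ((d : ℝ) / 2) := by
  rw [GaussianFourier.integral_rexp_neg_mul_sq_norm hb]
  norm_num [finrank_euclideanSpace_fin]

lemma gψ_nonneg (z : EuclideanSpace ℝ (Fin d)) : 0 ≤ gψ d σ z := by
  unfold gψ; positivity

lemma gψ_cont : Continuous (gψ d σ) := by
  unfold gψ; fun_prop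

lemma gψ_le (z : EuclideanSpace ℝ (Fin d)) : gψ d σ z ≤ (π * σ ^ 2) ^ (-(d : ℝ) / 2) := by
  unfold gψ
  nth_rewrite 2 [← mul_one ((π * σ ^ 2) ^ (-(d : ℝ) / 2))]
  refine mul_le_mul_of_nonneg_left ?_ (by positivity)
  refine Real.exp_le_one_iff.2 ?_
  rw [neg_div]
  exact neg_nonpos.mpr (by positivity)

lemma gψ_integrable (hσ : 0 < σ) : Integrable (gψ d σ) := by
  unfold gψ
  have h := (gauss_integrable (d := d) (b := 1 / σ ^ 2) (by positivity)).const_mul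
    ((π * σ ^ 2) ^ (-(d : ℝ) / 2))
  refine h.congr (Filter.Eventually.of_forall fun z => ?_)
  have : -(1 / σ ^ 2) * ‖z‖ ^ 2 = -‖z‖ ^ 2 / σ ^ 2 := by ring
  simp only []
  rw [this]

lemma gψ_conv (hσ : 0 < σ) (x y : EuclideanSpace ℝ (Fin d)) :
    ∫ z, gψ d σ (x - z) * gψ d σ (y - z)
      = (2 * π * σ ^ 2) ^ (-(d : ℝ) / 2) * rexp (-‖x - y‖ ^ 2 / (2 * σ ^ 2)) := by
  have hσ2 : (0 : ℝ) < σ ^ 2 := by positivity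
  have hA : (0 : ℝ) < π * σ ^ 2 := by positivity
  set c : ℝ := (π * σ ^ 2) ^ (-(d : ℝ) / 2) with hc
  set m : EuclideanSpace ℝ (Fin d) := (2 : ℝ)⁻¹ • (x + y) with hm
  have hpt : ∀ z, gψ d σ (x - z) * gψ d σ (y - z)
      = (c ^ 2 * rexp (-‖x - y‖ ^ 2 / (2 * σ ^ 2))) * rexp (-(2 / σ ^ 2) * ‖m - z‖ ^ 2) := by
    intro z
    have e1 : (x - z) + (y - z) = (2 : ℝ) • (m - z) := by rw [hm]; module
    have e2 : (x - z) - (y - z) = x - y := by abel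
    have h1 := parallelogram_law_with_norm ℝ (x - z) (y - z)
    rw [e1, e2, norm_smul] at h1
    have h1' : ‖x - z‖ ^ 2 + ‖y - z‖ ^ 2 = ‖x - y‖ ^ 2 / 2 + 2 * ‖m - z‖ ^ 2 := by
      have h2 : ‖(2 : ℝ)‖ = 2 := by norm_num
      rw [h2] at h1
      nlinarith [h1]
    have harg : -‖x - z‖ ^ 2 / σ ^ 2 + -‖y - z‖ ^ 2 / σ ^ 2
        = -‖x - y‖ ^ 2 / (2 * σ ^ 2) + -(2 / σ ^ 2) * ‖m - z‖ ^ 2 := by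
      rw [← add_div, show -‖x - z‖ ^ 2 + -‖y - z‖ ^ 2
        = -(‖x - y‖ ^ 2 / 2 + 2 * ‖m - z‖ ^ 2) from by linarith [h1']]
      field_simp
      ring
    unfold gψ
    rw [← hc, show c * rexp (-‖x - z‖ ^ 2 / σ ^ 2) * (c * rexp (-‖y - z‖ ^ 2 / σ ^ 2))
        = c ^ 2 * (rexp (-‖x - z‖ ^ 2 / σ ^ 2) * rexp (-‖y - z‖ ^ 2 / σ ^ 2)) from by ring,
      ← Real.exp_add, harg, Real.exp_add]
    ring
  simp_rw [hpt]
  rw [integral_const_mul,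
    integral_sub_left_eq_self (fun z => rexp (-(2 / σ ^ 2) * ‖z‖ ^ 2)) volume m,
    gauss_integral (by positivity)]
  have e2 : π / (2 / σ ^ 2) = (π * σ ^ 2) / 2 := by field_simp
  have e1 : c ^ 2 = (π * σ ^ 2) ^ (-(d : ℝ)) := by
    rw [hc, ← Real.rpow_natCast ((π * σ ^ 2) ^ (-(d : ℝ) / 2)) 2, ← Real.rpow_mul hA.le]
    norm_num
  rw [e2, Real.div_rpow hA.le (by norm_num), e1]
  have e4 : (2 * π * σ ^ 2 : ℝ) ^ (-(d : ℝ) / 2)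
      = 2 ^ (-(d : ℝ) / 2) * (π * σ ^ 2) ^ (-(d : ℝ) / 2) := by
    rw [show (2 * π * σ ^ 2 : ℝ) = 2 * (π * σ ^ 2) from by ring,
      Real.mul_rpow (by norm_num) hA.le]
  have e5 : (π * σ ^ 2 : ℝ) ^ (-(d : ℝ)) * (π * σ ^ 2) ^ ((d : ℝ) / 2)
      = (π * σ ^ 2) ^ (-(d : ℝ) / 2) := by
    rw [← Real.rpow_add hA]; congr 1; ring
  have e6 : (2 : ℝ) ^ (-(d : ℝ) / 2) = ((2 : ℝ) ^ ((d : ℝ) / 2))⁻¹ := by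
    rw [← Real.rpow_neg (by norm_num)]; congr 1; ring
  rw [e4, e6, ← e5]
  ring

/-- the target Gaussian density `φ` -/
noncomputable def gφ (d : ℕ) (σ : ℝ) (z : EuclideanSpace ℝ (Fin d)) : ℝ :=
  (2 * π * σ ^ 2) ^ (-(d : ℝ) / 2) * rexp (-‖z‖ ^ 2 / (2 * σ ^ 2))

lemma gφ_nonneg (z : EuclideanSpace ℝ (Fin d)) : 0 ≤ gφ d σ z := by
  unfold gφ; positivity

lemma gφ_cont : Continuous (gφ d σ) := by
  unfold gφ; fun_prop

lemma gφ_integrable (hσ : 0 < σ) : Integrable (gφ d σ) := by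
  unfold gφ
  have h := (gauss_integrable (d := d) (b := 1 / (2 * σ ^ 2)) (by positivity)).const_mul
    ((2 * π * σ ^ 2) ^ (-(d : ℝ) / 2))
  refine h.congr (Filter.Eventually.of_forall fun z => ?_)
  have : -(1 / (2 * σ ^ 2)) * ‖z‖ ^ 2 = -‖z‖ ^ 2 / (2 * σ ^ 2) := by ring
  simp only []
  rw [this]

lemma gφ_total (hσ : 0 < σ) : ∫ z, gφ d σ z = 1 := by
  unfold gφ
  have hpt : ∀ z : EuclideanSpace ℝ (Fin d),
      (2 * π * σ ^ 2) ^ (-(d : ℝ) / 2) * rexp (-‖z‖ ^ 2 / (2 * σ ^ 2))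
      = (2 * π * σ ^ 2) ^ (-(d : ℝ) / 2) * rexp (-(1 / (2 * σ ^ 2)) * ‖z‖ ^ 2) := by
    intro z; congr 1; rw [Real.exp_eq_exp]; ring
  simp_rw [hpt]
  rw [integral_const_mul, gauss_integral (by positivity : (0:ℝ) < 1 / (2 * σ ^ 2))]
  have hA : (0 : ℝ) < 2 * π * σ ^ 2 := by positivity
  rw [show π / (1 / (2 * σ ^ 2)) = 2 * π * σ ^ 2 from by field_simp,
    ← Real.rpow_add hA, show (-(d : ℝ) / 2 + (d : ℝ) / 2) = 0 from by ring,
    Real.rpow_zero]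

lemma gψ_prod_integrable (hσ : 0 < σ) (x y : EuclideanSpace ℝ (Fin d)) :
    Integrable (fun z => gψ d σ (x - z) * gψ d σ (y - z)) := by
  have h1 : Integrable (fun z => gψ d σ (y - z)) :=
    (integrable_comp_sub_left (gψ d σ) y).2 (gψ_integrable hσ)
  refine Integrable.bdd_mul (f := fun z => gψ d σ (x - z))
    (c := (π * σ ^ 2) ^ (-(d : ℝ) / 2)) h1
    (gψ_cont.comp (continuous_const.sub continuous_id)).aestronglyMeasurable
    (Filter.Eventually.of_forall fun z => ?_)
  rw [Real.norm_eq_abs, abs_of_nonneg (gψ_nonneg _)]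
  exact gψ_le _

lemma ind_integrable (a : ℝ) :
    Integrable (fun t => if t < a then (1 : ℝ) else 0)
      (volume.restrict (Set.Ioi (0 : ℝ))) := by
  have h : (fun t => if t < a then (1 : ℝ) else 0)
      = (Set.Iio a).indicator (fun _ => (1 : ℝ)) := by
    funext t; simp [Set.indicator_apply, Set.mem_Iio]
  rw [h, integrable_indicator_iff measurableSet_Iio]
  refine integrableOn_const ?_
  rw [Measure.restrict_apply measurableSet_Iio, Set.Iio_inter_Ioi, Real.volume_Ioo]
  exact ENNReal.ofReal_ne_top

lemma layer (a b : ℝ) (ha : 0 ≤ a) (hb : 0 ≤ b) :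
    ∫ t in Set.Ioi (0 : ℝ),
      (if t < a then (1 : ℝ) else 0) * (if t < b then (1 : ℝ) else 0) = min a b := by
  have hpt : ∀ t : ℝ, (if t < a then (1 : ℝ) else 0) * (if t < b then (1 : ℝ) else 0)
      = (Set.Iio (min a b)).indicator (fun _ => (1 : ℝ)) t := by
    intro t
    by_cases h1 : t < a <;> by_cases h2 : t < b <;>
      simp [Set.indicator_apply, Set.mem_Iio, h1, h2, lt_min_iff]
  simp_rw [hpt]
  rw [integral_indicator measurableSet_Iio, setIntegral_const, smul_eq_mul, mul_one,
    measureReal_restrict_apply measurableSet_Iio, Set.Iio_inter_Ioi, Real.volume_real_Ioo,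
    max_eq_left (by simp [le_min_iff, ha, hb]), sub_zero]


noncomputable def μK (d : ℕ) : Measure (ℝ × EuclideanSpace ℝ (Fin d)) :=
  (volume.restrict (Set.Ioi (0 : ℝ))).prod volume

noncomputable def auxK (d : ℕ) (σ : ℝ) (p : EuclideanSpace ℝ (Fin d) → ℝ)
    (x : EuclideanSpace ℝ (Fin d)) (u : ℝ × EuclideanSpace ℝ (Fin d)) : ℝ :=
  (if u.1 < p x then (1 : ℝ) else 0) * gψ d σ (x - u.2)

variable {p : EuclideanSpace ℝ (Fin d) → ℝ}

lemma auxK_nonneg (x : EuclideanSpace ℝ (Fin d)) (u : ℝ × EuclideanSpace ℝ (Fin d)) :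
    0 ≤ auxK d σ p x u := by
  unfold auxK
  refine mul_nonneg ?_ (gψ_nonneg _)
  split <;> norm_num

lemma auxK_int (hσ : 0 < σ) (x : EuclideanSpace ℝ (Fin d)) :
    Integrable (auxK d σ p x) (μK d) := by
  unfold auxK μK
  exact (ind_integrable (p x)).mul_prod
    ((integrable_comp_sub_left (gψ d σ) x).2 (gψ_integrable hσ))

lemma auxKK_int (hσ : 0 < σ) (x y : EuclideanSpace ℝ (Fin d)) :
    Integrable (fun u => auxK d σ p x u * auxK d σ p y u) (μK d) := by
  have ht : Integrable
      (fun t => (if t < p x then (1 : ℝ) else 0) * (if t < p y then (1 : ℝ) else 0))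
      (volume.restrict (Set.Ioi (0 : ℝ))) := by
    refine (ind_integrable (min (p x) (p y))).congr (Filter.Eventually.of_forall fun t => ?_)
    by_cases h1 : t < p x <;> by_cases h2 : t < p y <;> simp [h1, h2, lt_min_iff]
  refine (ht.mul_prod (gψ_prod_integrable hσ x y)).congr
    (Filter.Eventually.of_forall fun u => ?_)
  unfold auxK
  ring

lemma auxKK_integral (hσ : 0 < σ) (hp : ∀ x, 0 ≤ p x) (x y : EuclideanSpace ℝ (Fin d)) :
    ∫ u, auxK d σ p x u * auxK d σ p y u ∂(μK d)
      = min (p x) (p y) * gφ d σ (x - y) := by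
  unfold auxK μK
  have hpt : ∀ u : ℝ × EuclideanSpace ℝ (Fin d),
      ((if u.1 < p x then (1 : ℝ) else 0) * gψ d σ (x - u.2))
        * ((if u.1 < p y then (1 : ℝ) else 0) * gψ d σ (y - u.2))
      = (fun t => (if t < p x then (1 : ℝ) else 0) * (if t < p y then (1 : ℝ) else 0)) u.1
        * (fun z => gψ d σ (x - z) * gψ d σ (y - z)) u.2 := fun u => by ring
  simp_rw [hpt]
  refine Eq.trans (integral_prod_mul
    (fun t => (if t < p x then (1 : ℝ) else 0) * (if t < p y then (1 : ℝ) else 0))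
    (fun z => gψ d σ (x - z) * gψ d σ (y - z))) ?_
  rw [layer _ _ (hp x) (hp y), gψ_conv hσ]
  rfl

lemma auxK_meas2 (hp : Measurable p) :
    Measurable (fun q : EuclideanSpace ℝ (Fin d) × (ℝ × EuclideanSpace ℝ (Fin d)) =>
      auxK d σ p q.1 q.2) := by
  unfold auxK
  refine Measurable.mul ?_ ?_
  · refine Measurable.ite ?_ measurable_const measurable_const
    exact measurableSet_lt (measurable_fst.comp measurable_snd) (hp.comp measurable_fst)
  · exact gψ_cont.measurable.comp (measurable_fst.sub (measurable_snd.comp measurable_snd))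


lemma double_nonneg (hσ : 0 < σ) (hp_meas : Measurable p) (hp : ∀ x, 0 ≤ p x)
    (f : EuclideanSpace ℝ (Fin d) → ℝ) (hf : Measurable f)
    (hF_int : Integrable (fun q : EuclideanSpace ℝ (Fin d) × EuclideanSpace ℝ (Fin d) =>
        f q.1 * f q.2 * (min (p q.1) (p q.2) * gφ d σ (q.1 - q.2)))
      ((volume : Measure (EuclideanSpace ℝ (Fin d))).prod volume)) :
    0 ≤ ∫ q : EuclideanSpace ℝ (Fin d) × EuclideanSpace ℝ (Fin d),
        f q.1 * f q.2 * (min (p q.1) (p q.2) * gφ d σ (q.1 - q.2))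
        ∂((volume : Measure (EuclideanSpace ℝ (Fin d))).prod volume) := by
  haveI : SFinite (μK d) := by unfold μK; infer_instance
  set G : (EuclideanSpace ℝ (Fin d) × EuclideanSpace ℝ (Fin d)) →
      (ℝ × EuclideanSpace ℝ (Fin d)) → ℝ :=
    fun q u => (f q.1 * auxK d σ p q.1 u) * (f q.2 * auxK d σ p q.2 u) with hG
  have hFS : ∀ q : EuclideanSpace ℝ (Fin d) × EuclideanSpace ℝ (Fin d),
      f q.1 * f q.2 * (min (p q.1) (p q.2) * gφ d σ (q.1 - q.2)) = ∫ u, G q u ∂(μK d) := by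
    intro q
    rw [← auxKK_integral hσ hp q.1 q.2, ← integral_const_mul]
    exact integral_congr_ae (Filter.Eventually.of_forall fun u => by rw [hG]; ring)
  have hG_meas : AEStronglyMeasurable
      (fun r : (EuclideanSpace ℝ (Fin d) × EuclideanSpace ℝ (Fin d)) ×
        (ℝ × EuclideanSpace ℝ (Fin d)) => G r.1 r.2)
      (((volume : Measure (EuclideanSpace ℝ (Fin d))).prod volume).prod (μK d)) := by
    have mK1 : Measurable (fun r : (EuclideanSpace ℝ (Fin d) × EuclideanSpace ℝ (Fin d)) ×
        (ℝ × EuclideanSpace ℝ (Fin d)) => auxK d σ p r.1.1 r.2) :=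
      (auxK_meas2 hp_meas).comp ((measurable_fst.fst).prodMk measurable_snd)
    have mK2 : Measurable (fun r : (EuclideanSpace ℝ (Fin d) × EuclideanSpace ℝ (Fin d)) ×
        (ℝ × EuclideanSpace ℝ (Fin d)) => auxK d σ p r.1.2 r.2) :=
      (auxK_meas2 hp_meas).comp ((measurable_fst.snd).prodMk measurable_snd)
    exact (((hf.comp measurable_fst.fst).mul mK1).mul
      ((hf.comp measurable_fst.snd).mul mK2)).aestronglyMeasurable
  have hG_int : Integrable
      (fun r : (EuclideanSpace ℝ (Fin d) × EuclideanSpace ℝ (Fin d)) ×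
        (ℝ × EuclideanSpace ℝ (Fin d)) => G r.1 r.2)
      (((volume : Measure (EuclideanSpace ℝ (Fin d))).prod volume).prod (μK d)) := by
    refine (integrable_prod_iff hG_meas).2 ⟨Filter.Eventually.of_forall fun q => ?_, ?_⟩
    · refine ((auxKK_int hσ q.1 q.2).const_mul (f q.1 * f q.2)).congr
        (Filter.Eventually.of_forall fun u => by rw [hG]; ring)
    · refine hF_int.norm.congr (Filter.Eventually.of_forall fun q => ?_)
      have h1 : ∀ u, ‖G q u‖ = |f q.1 * f q.2| * (auxK d σ p q.1 u * auxK d σ p q.2 u) := by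
        intro u
        rw [hG, Real.norm_eq_abs]
        simp only [abs_mul, abs_of_nonneg (auxK_nonneg (σ := σ) (p := p) q.1 u),
          abs_of_nonneg (auxK_nonneg (σ := σ) (p := p) q.2 u)]
        ring
      simp_rw [h1]
      rw [integral_const_mul, auxKK_integral hσ hp, Real.norm_eq_abs, abs_mul,
        abs_of_nonneg (mul_nonneg (le_min (hp q.1) (hp q.2)) (gφ_nonneg _))]
  calc (0:ℝ) ≤ ∫ u, (∫ x, f x * auxK d σ p x u) ^ 2 ∂(μK d) :=
        integral_nonneg fun u => sq_nonneg _
    _ = ∫ u, ∫ q, G q u ∂((volume : Measure (EuclideanSpace ℝ (Fin d))).prod volume) ∂(μK d) := by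
        refine integral_congr_ae (Filter.Eventually.of_forall fun u => ?_)
        show (∫ x, f x * auxK d σ p x u) ^ 2 = ∫ q, G q u ∂(volume.prod volume)
        rw [sq]
        exact (integral_prod_mul (fun x => f x * auxK d σ p x u)
          (fun y => f y * auxK d σ p y u)).symm
    _ = ∫ q, ∫ u, G q u ∂(μK d)
        ∂((volume : Measure (EuclideanSpace ℝ (Fin d))).prod volume) :=
        (integral_integral_swap hG_int).symm
    _ = _ := integral_congr_ae (Filter.Eventually.of_forall fun q => (hFS q).symm)


lemma gφ_symm (a b : EuclideanSpace ℝ (Fin d)) : gφ d σ (a - b) = gφ d σ (b - a) := by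
  unfold gφ; rw [norm_sub_rev]

lemma gφ_shift_total (hσ : 0 < σ) (x : EuclideanSpace ℝ (Fin d)) :
    ∫ y, gφ d σ (x - y) = 1 := by
  rw [integral_sub_left_eq_self (gφ d σ) volume x]; exact gφ_total hσ

lemma F_int (hσ : 0 < σ) (hp_meas : Measurable p) (hp : ∀ x, 0 ≤ p x)
    (f : EuclideanSpace ℝ (Fin d) → ℝ) (hf : Measurable f)
    (h2 : Integrable (fun x => p x * f x ^ 2)) :
    Integrable (fun q : EuclideanSpace ℝ (Fin d) × EuclideanSpace ℝ (Fin d) =>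
        f q.1 * f q.2 * (min (p q.1) (p q.2) * gφ d σ (q.1 - q.2)))
      ((volume : Measure (EuclideanSpace ℝ (Fin d))).prod volume) := by
  have hgm : Measurable (fun q : EuclideanSpace ℝ (Fin d) × EuclideanSpace ℝ (Fin d) =>
      gφ d σ (q.1 - q.2)) :=
    gφ_cont.measurable.comp (measurable_fst.sub measurable_snd)
  have hD1 : Integrable (fun q : EuclideanSpace ℝ (Fin d) × EuclideanSpace ℝ (Fin d) =>
      (p q.1 * f q.1 ^ 2) * gφ d σ (q.1 - q.2))
      ((volume : Measure (EuclideanSpace ℝ (Fin d))).prod volume) := by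
    have hm : AEStronglyMeasurable (fun q : EuclideanSpace ℝ (Fin d) × EuclideanSpace ℝ (Fin d) =>
        (p q.1 * f q.1 ^ 2) * gφ d σ (q.1 - q.2))
        ((volume : Measure (EuclideanSpace ℝ (Fin d))).prod volume) :=
      (((hp_meas.comp measurable_fst).mul ((hf.comp measurable_fst).pow measurable_const)).mul
        hgm).aestronglyMeasurable
    refine (integrable_prod_iff hm).2 ⟨Filter.Eventually.of_forall fun x => ?_, ?_⟩
    · exact ((integrable_comp_sub_left (gφ d σ) x).2 (gφ_integrable hσ)).const_mul (p x * f x ^ 2)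
    · refine h2.norm.congr (Filter.Eventually.of_forall fun x => ?_)
      have hpt : ∀ y, ‖(p x * f x ^ 2) * gφ d σ (x - y)‖
          = ‖p x * f x ^ 2‖ * gφ d σ (x - y) := by
        intro y
        rw [Real.norm_eq_abs, Real.norm_eq_abs, abs_mul, abs_of_nonneg (gφ_nonneg _)]
      simp_rw [hpt]
      rw [integral_const_mul, gφ_shift_total hσ, mul_one]
  have hD2 : Integrable (fun q : EuclideanSpace ℝ (Fin d) × EuclideanSpace ℝ (Fin d) =>
      (p q.2 * f q.2 ^ 2) * gφ d σ (q.1 - q.2))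
      ((volume : Measure (EuclideanSpace ℝ (Fin d))).prod volume) := by
    refine hD1.swap.congr (Filter.Eventually.of_forall fun q => ?_)
    show (p q.2 * f q.2 ^ 2) * gφ d σ (q.2 - q.1) = _
    rw [gφ_symm]
  have hmeas : AEStronglyMeasurable (fun q : EuclideanSpace ℝ (Fin d) × EuclideanSpace ℝ (Fin d) =>
      f q.1 * f q.2 * (min (p q.1) (p q.2) * gφ d σ (q.1 - q.2)))
      ((volume : Measure (EuclideanSpace ℝ (Fin d))).prod volume) :=
    (((hf.comp measurable_fst).mul (hf.comp measurable_snd)).mul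
      (((hp_meas.comp measurable_fst).min (hp_meas.comp measurable_snd)).mul
        hgm)).aestronglyMeasurable
  refine Integrable.mono' ((hD1.add hD2).const_mul (2⁻¹ : ℝ)) hmeas
    (Filter.Eventually.of_forall fun q => ?_)
  have hm0 : (0:ℝ) ≤ min (p q.1) (p q.2) := le_min (hp q.1) (hp q.2)
  have hg0 := gφ_nonneg (σ := σ) (q.1 - q.2)
  have e : ‖f q.1 * f q.2 * (min (p q.1) (p q.2) * gφ d σ (q.1 - q.2))‖
      = ((|f q.1| * |f q.2|) * min (p q.1) (p q.2)) * gφ d σ (q.1 - q.2) := by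
    rw [Real.norm_eq_abs, abs_mul, abs_mul, abs_mul,
      abs_of_nonneg hm0, abs_of_nonneg hg0]
    ring
  rw [e]
  have key : (|f q.1| * |f q.2|) * min (p q.1) (p q.2)
      ≤ 2⁻¹ * (p q.1 * f q.1 ^ 2 + p q.2 * f q.2 ^ 2) := by
    have h2ab : 2 * (|f q.1| * |f q.2|) ≤ f q.1 ^ 2 + f q.2 ^ 2 := by
      nlinarith [sq_nonneg (|f q.1| - |f q.2|), sq_abs (f q.1), sq_abs (f q.2)]
    have c1 := mul_le_mul_of_nonneg_right h2ab hm0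
    have c2 := mul_le_mul_of_nonneg_left (min_le_left (p q.1) (p q.2)) (sq_nonneg (f q.1))
    have c3 := mul_le_mul_of_nonneg_left (min_le_right (p q.1) (p q.2)) (sq_nonneg (f q.2))
    nlinarith [c1, c2, c3]
  calc ((|f q.1| * |f q.2|) * min (p q.1) (p q.2)) * gφ d σ (q.1 - q.2)
      ≤ (2⁻¹ * (p q.1 * f q.1 ^ 2 + p q.2 * f q.2 ^ 2)) * gφ d σ (q.1 - q.2) :=
        mul_le_mul_of_nonneg_right key hg0
    _ = 2⁻¹ * ((p q.1 * f q.1 ^ 2) * gφ d σ (q.1 - q.2)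
          + (p q.2 * f q.2 ^ 2) * gφ d σ (q.1 - q.2)) := by ring

end RWMAux

open RWMAux

/-- **Positivity of the RWM kernel on `L²(π)`.**
Let `π` be a probability density on `ℝ^d` and let `P` be the Random Walk Metropolis
kernel for `π` with Gaussian proposal `N(x, σ²I_d)`.  Then `P` is a positive operator
on `L²(π)`: for every `f ∈ L²(π)`, `⟨f, Pf⟩_π = ∫ π(x) f(x) (Pf)(x) dx ≥ 0`, where
`(Pf)(x) = ∫ f(y) min{1, π(y)/π(x)} φ_σ(y − x) dy + (1 − α(x)) f(x)`. -/
theorem rwm_positive_operator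
    (d : ℕ)
    (π : EuclideanSpace ℝ (Fin d) → ℝ)
    (hπ_meas : Measurable π)
    (hπ_nonneg : ∀ x, 0 ≤ π x)
    (hπ_prob : ∫ x, π x = 1)
    (σ : ℝ) (hσ : 0 < σ)
    -- the density of the Gaussian proposal increment `N(0, σ²I_d)`
    (φ : EuclideanSpace ℝ (Fin d) → ℝ)
    (hφ : ∀ z, φ z = (2 * Real.pi * σ ^ 2) ^ (-(d : ℝ) / 2) *
      Real.exp (-‖z‖ ^ 2 / (2 * σ ^ 2)))
    -- the acceptance rate `α(x)`
    (α : EuclideanSpace ℝ (Fin d) → ℝ)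
    (hα : ∀ x, α x = ∫ y, min 1 (π y / π x) * φ (y - x))
    -- the action of the RWM kernel on functions
    (Pf : (EuclideanSpace ℝ (Fin d) → ℝ) → EuclideanSpace ℝ (Fin d) → ℝ)
    (hPf : ∀ f x, Pf f x = (∫ y, f y * (min 1 (π y / π x) * φ (y - x))) +
      (1 - α x) * f x) :
    ∀ f : EuclideanSpace ℝ (Fin d) → ℝ, Measurable f →
      Integrable (fun x => π x * f x ^ 2) →
      0 ≤ ∫ x, π x * f x * Pf f x := by
  intro f hf_meas hf2
  have hφg : φ = gφ d σ := funext fun z => by rw [hφ z]; rfl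
  have hπφ_min : ∀ x y, π x * min 1 (π y / π x) = min (π x) (π y) := by
    intro x y
    rcases eq_or_lt_of_le (hπ_nonneg x) with h | h
    · rw [← h]
      simp [min_eq_left (hπ_nonneg y)]
    · rw [mul_min_of_nonneg _ _ (hπ_nonneg x), mul_one,
        show π x * (π y / π x) = π y from by field_simp]
  have hα_int : ∀ x, Integrable (fun y => min 1 (π y / π x) * φ (y - x)) := by
    intro x
    have hint : Integrable (fun y => φ (y - x)) := by
      rw [hφg]; exact (gφ_integrable hσ).comp_sub_right x
    refine hint.mono' ?_ (Filter.Eventually.of_forall fun y => ?_)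
    · refine ((measurable_const.min (hπ_meas.div measurable_const)).mul ?_).aestronglyMeasurable
      rw [hφg]
      exact gφ_cont.measurable.comp (measurable_id.sub measurable_const)
    · rw [Real.norm_eq_abs, abs_mul,
        abs_of_nonneg (le_min zero_le_one (div_nonneg (hπ_nonneg y) (hπ_nonneg x))),
        abs_of_nonneg (by rw [hφg]; exact gφ_nonneg _)]
      exact mul_le_of_le_one_left (by rw [hφg]; exact gφ_nonneg _) (min_le_left _ _)
  have hφ_shift_total : ∀ x : EuclideanSpace ℝ (Fin d), ∫ y, φ (y - x) = 1 := by
    intro x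
    rw [hφg, integral_sub_right_eq_self (gφ d σ) x]
    exact gφ_total hσ
  have hα_le_one : ∀ x, α x ≤ 1 := by
    intro x
    calc α x = ∫ y, min 1 (π y / π x) * φ (y - x) := hα x
      _ ≤ ∫ y, φ (y - x) := by
          refine integral_mono (hα_int x)
            (by rw [hφg]; exact (gφ_integrable hσ).comp_sub_right x) fun y => ?_
          exact mul_le_of_le_one_left (by rw [hφg]; exact gφ_nonneg _) (min_le_left _ _)
      _ = 1 := hφ_shift_total x
  have hα_nonneg : ∀ x, 0 ≤ α x := by
    intro x
    rw [hα x]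
    exact integral_nonneg fun y => mul_nonneg
      (le_min zero_le_one (div_nonneg (hπ_nonneg y) (hπ_nonneg x)))
      (by rw [hφg]; exact gφ_nonneg _)
  have hα_meas : Measurable α := by
    have hrw : α = fun x => ∫ y,
        (fun q : EuclideanSpace ℝ (Fin d) × EuclideanSpace ℝ (Fin d) =>
          min 1 (π q.2 / π q.1) * gφ d σ (q.2 - q.1)) (x, y) := by
      funext x; rw [hα x, hφg]
    rw [hrw]
    exact (((measurable_const.min ((hπ_meas.comp measurable_snd).div
      (hπ_meas.comp measurable_fst))).mul (gφ_cont.measurable.comp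
        (measurable_snd.sub measurable_fst))).stronglyMeasurable.integral_prod_right').measurable
  set A : EuclideanSpace ℝ (Fin d) → ℝ :=
    fun x => ∫ y, f y * (min (π x) (π y) * gφ d σ (x - y)) with hA_def
  set B : EuclideanSpace ℝ (Fin d) → ℝ :=
    fun x => π x * (1 - α x) * f x ^ 2 with hB_def
  have hsplit : ∀ x, π x * f x * Pf f x = f x * A x + B x := by
    intro x
    rw [hPf]
    have h1 : π x * (∫ y, f y * (min 1 (π y / π x) * φ (y - x))) = A x := by
      rw [hA_def, ← integral_const_mul]
      refine integral_congr_ae (Filter.Eventually.of_forall fun y => ?_)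
      show π x * (f y * (min 1 (π y / π x) * φ (y - x)))
          = f y * (min (π x) (π y) * gφ d σ (x - y))
      rw [hφg, gφ_symm y x, ← hπφ_min x y]
      ring
    calc π x * f x * ((∫ y, f y * (min 1 (π y / π x) * φ (y - x))) + (1 - α x) * f x)
        = f x * (π x * ∫ y, f y * (min 1 (π y / π x) * φ (y - x)))
          + π x * (1 - α x) * f x ^ 2 := by ring
      _ = f x * A x + B x := by rw [h1, hB_def]
  have hF_int := F_int hσ hπ_meas hπ_nonneg f hf_meas hf2
  have hfA_eq : ∀ x, f x * A x = ∫ y,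
      (fun q : EuclideanSpace ℝ (Fin d) × EuclideanSpace ℝ (Fin d) =>
        f q.1 * f q.2 * (min (π q.1) (π q.2) * gφ d σ (q.1 - q.2))) (x, y) := by
    intro x
    rw [hA_def, ← integral_const_mul]
    refine integral_congr_ae (Filter.Eventually.of_forall fun y => ?_)
    show f x * (f y * (min (π x) (π y) * gφ d σ (x - y)))
        = f x * f y * (min (π x) (π y) * gφ d σ (x - y))
    ring
  have hfA_int : Integrable (fun x => f x * A x) :=
    hF_int.integral_prod_left.congr (Filter.Eventually.of_forall fun x => (hfA_eq x).symm)
  have hfA_nonneg : 0 ≤ ∫ x, f x * A x := by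
    have h1 : ∫ x, f x * A x = ∫ q : EuclideanSpace ℝ (Fin d) × EuclideanSpace ℝ (Fin d),
        f q.1 * f q.2 * (min (π q.1) (π q.2) * gφ d σ (q.1 - q.2))
        ∂((volume : Measure (EuclideanSpace ℝ (Fin d))).prod volume) := by
      rw [integral_congr_ae (Filter.Eventually.of_forall hfA_eq)]
      exact (integral_prod _ hF_int).symm
    rw [h1]
    exact double_nonneg hσ hπ_meas hπ_nonneg f hf_meas hF_int
  have hB_nonneg : ∀ x, 0 ≤ B x := by
    intro x
    rw [hB_def]
    exact mul_nonneg (mul_nonneg (hπ_nonneg x) (sub_nonneg.2 (hα_le_one x))) (sq_nonneg _)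
  have hB_int : Integrable B := by
    refine hf2.mono' ((hπ_meas.mul (measurable_const.sub hα_meas)).mul
      (hf_meas.pow_const 2)).aestronglyMeasurable
      (Filter.Eventually.of_forall fun x => ?_)
    rw [Real.norm_eq_abs, abs_of_nonneg (hB_nonneg x)]
    show π x * (1 - α x) * f x ^ 2 ≤ π x * f x ^ 2
    have h1 := hα_nonneg x
    have h2 := hπ_nonneg x
    nlinarith [mul_nonneg (mul_nonneg h1 h2) (sq_nonneg (f x))]
  have hfinal : ∫ x, π x * f x * Pf f x = (∫ x, f x * A x) + ∫ x, B x := by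
    rw [← integral_add hfA_int hB_int]
    exact integral_congr_ae (Filter.Eventually.of_forall hsplit)
  rw [hfinal]
  exact add_nonneg hfA_nonneg (integral_nonneg hB_nonneg)
end

section
/- Let π be a probability density on ℝ proportional to exp(−U(x)), where U : ℝ → ℝ is continuously differentiable and strictly convex with U(0) = 0 and U′(0) = 0, and Var(π) = 1. Let c > 0, Z ∼ N(0, c), and a(x) = E[min{1, π(x+Z)/π(x)}]. Then for every x with |x| > 1/2, a(x) ≥ φ_c(1/2)/2, where φ_c is the density of N(0, c). -/
open MeasureTheory

lemma rwm_aux_nonneg (U : ℝ → ℝ) (hU_smooth : ContDiff ℝ 1 U)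
    (hU_conv : StrictConvexOn ℝ Set.univ U) (hU0 : U 0 = 0) (hU'0 : deriv U 0 = 0)
    (y : ℝ) : 0 ≤ U y := by
  have hd : DifferentiableAt ℝ U 0 := (hU_smooth.differentiable one_ne_zero) 0
  have hc := hU_conv.convexOn
  rcases lt_trichotomy y 0 with h | h | h
  · have := hc.slope_le_deriv (Set.mem_univ y) (Set.mem_univ 0) h hd
    rw [hU'0, slope_def_field, hU0] at this
    have h2 : (0 - U y) / (0 - y) ≤ 0 := this
    rw [zero_sub, zero_sub, neg_div_neg_eq] at h2
    have := mul_nonpos_of_nonpos_of_nonneg h2 (by linarith : (0:ℝ) ≤ -y)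
    rw [div_mul_eq_mul_div, mul_neg, neg_div, neg_nonpos] at this
    have hy : y ≠ 0 := h.ne
    rwa [mul_div_assoc, div_self hy, mul_one] at this
  · simp [h, hU0]
  · have := hc.deriv_le_slope (Set.mem_univ 0) (Set.mem_univ y) h hd
    rw [hU'0, slope_def_field, hU0, sub_zero, sub_zero] at this
    have h2 := mul_nonneg this h.le
    rwa [div_mul_cancel₀ _ h.ne'] at h2

/-- On the right half-line, `U` is monotone: for `0 ≤ a ≤ b`, `U a ≤ U b`. -/
lemma rwm_aux_mono (U : ℝ → ℝ) (hU_smooth : ContDiff ℝ 1 U)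
    (hU_conv : StrictConvexOn ℝ Set.univ U) (hU0 : U 0 = 0) (hU'0 : deriv U 0 = 0)
    (a b : ℝ) (ha : 0 ≤ a) (hab : a ≤ b) : U a ≤ U b := by
  rcases eq_or_lt_of_le (ha.trans hab) with hb | hb
  · have ha' : a = 0 := le_antisymm (hab.trans hb.symm.le) ha
    simp [ha', ← hb, hU0]
  · set t := a / b with ht
    have ht0 : 0 ≤ t := div_nonneg ha hb.le
    have ht1 : t ≤ 1 := div_le_one_of_le₀ hab hb.le
    have key := hU_conv.convexOn.2 (Set.mem_univ 0) (Set.mem_univ b)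
      (by linarith : 0 ≤ 1 - t) ht0 (by ring)
    have hrw : (1 - t) • (0:ℝ) + t • b = a := by
      simp [smul_eq_mul, ht, div_mul_cancel₀ _ hb.ne']
    rw [hrw, hU0, smul_eq_mul, smul_eq_mul, mul_zero, zero_add] at key
    have hUb := rwm_aux_nonneg U hU_smooth hU_conv hU0 hU'0 b
    nlinarith

/-- **Acceptance rate bound away from the mode (Case 2 of Proposition 3.1).**
Let `π ∝ exp(-U)` on `ℝ` with `U` continuously differentiable and strictly convex,
`U(0) = U'(0) = 0`, `Var(π) = 1`.  Let `c > 0` and `Z ∼ N(0, c)`, and set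
`a(x) = E[min{1, π(x+Z)/π(x)}]`.  Then for every `x` with `|x| > 1/2`,
`a(x) ≥ φ_c(1/2)/2`, where `φ_c` is the density of `N(0, c)`. -/
theorem rwm_acceptance_rate_tail_bound
    (U : ℝ → ℝ)
    (hU_smooth : ContDiff ℝ 1 U)
    (hU_conv : StrictConvexOn ℝ Set.univ U)
    (hU0 : U 0 = 0)
    (hU'0 : deriv U 0 = 0)
    (hU_int : Integrable (fun x => Real.exp (-U x)))
    (π : ℝ → ℝ)
    (hπ : ∀ x, π x = Real.exp (-U x) / ∫ z, Real.exp (-U z))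
    -- unit variance
    (hm1 : Integrable (fun x => x * π x))
    (hm2 : Integrable (fun x => x ^ 2 * π x))
    (hvar : (∫ x, x ^ 2 * π x) - (∫ x, x * π x) ^ 2 = 1)
    (c : ℝ) (hc : 0 < c)
    -- densities of `N(0,w)`
    (gauss : ℝ → ℝ → ℝ)
    (hgauss : ∀ w z, gauss w z = (Real.sqrt (2 * Real.pi * w))⁻¹ *
      Real.exp (-z ^ 2 / (2 * w)))
    -- the average acceptance rate with Z ∼ N(0, c)
    (a : ℝ → ℝ)
    (ha : ∀ x, a x = ∫ z, min 1 (π (x + z) / π x) * gauss c z) :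
    ∀ x : ℝ, 1 / 2 < |x| → gauss c (1 / 2) / 2 ≤ a x := by
  intro x hx
  -- basic facts
  have hT : (0:ℝ) < ∫ z, Real.exp (-U z) := by
    have : (fun x => Real.exp (-U x)) = fun x => Real.exp ((fun y => -U y) x) := rfl
    exact integral_exp_pos (this ▸ hU_int)
  have hπpos : ∀ y, 0 < π y := fun y => by
    rw [hπ]; exact div_pos (Real.exp_pos _) hT
  have hπcont : Continuous π := by
    rw [funext hπ]
    exact (Real.continuous_exp.comp (hU_smooth.continuous.neg)).div_const _
  have hgausscont : Continuous (gauss c) := by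
    rw [funext (hgauss c)]
    exact continuous_const.mul (Real.continuous_exp.comp
      ((continuous_pow 2).neg.div_const _))
  have hgaussnonneg : ∀ z, 0 ≤ gauss c z := fun z => by
    rw [hgauss]
    exact mul_nonneg (inv_nonneg.mpr (Real.sqrt_nonneg _)) (Real.exp_pos _).le
  -- integrability of the gaussian density
  have hgauss_int : Integrable (gauss c) := by
    have h2c : (0:ℝ) < (2 * c)⁻¹ := by positivity
    have h1 := (integrable_exp_neg_mul_sq h2c).const_mul (Real.sqrt (2 * Real.pi * c))⁻¹
    have heq : (fun z : ℝ => (Real.sqrt (2 * Real.pi * c))⁻¹ *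
        Real.exp (-(2 * c)⁻¹ * z ^ 2)) = gauss c := by
      funext z
      rw [hgauss]
      congr 1
      rw [neg_div, div_eq_inv_mul, neg_mul]
    rwa [heq] at h1
  -- the integrand
  set f : ℝ → ℝ := fun z => min 1 (π (x + z) / π x) * gauss c z with hf
  have hfnonneg : ∀ z, 0 ≤ f z := fun z =>
    mul_nonneg (le_min zero_le_one (div_nonneg (hπpos _).le (hπpos _).le)) (hgaussnonneg z)
  have hfle : ∀ z, f z ≤ gauss c z := fun z => by
    have : min 1 (π (x + z) / π x) ≤ 1 := min_le_left _ _
    calc f z ≤ 1 * gauss c z := mul_le_mul_of_nonneg_right this (hgaussnonneg z)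
    _ = gauss c z := one_mul _
  have hf_int : Integrable f := by
    refine hgauss_int.mono ?_ ?_
    · exact ((continuous_const.min ((hπcont.comp (continuous_const.add continuous_id)).div_const
        _)).mul hgausscont).aestronglyMeasurable
    · refine Filter.Eventually.of_forall fun z => ?_
      rw [Real.norm_eq_abs, Real.norm_eq_abs, abs_of_nonneg (hfnonneg z),
        abs_of_nonneg (hgaussnonneg z)]
      exact hfle z
  -- choose the interval depending on the sign of x
  set I : Set ℝ := if 0 < x then Set.Ioo (-(1/2):ℝ) 0 else Set.Ioo (0:ℝ) (1/2) with hI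
  have hImeas : MeasurableSet I := by
    rw [hI]; split <;> exact measurableSet_Ioo
  have hIvol : (volume I).toReal = 1 / 2 := by
    rw [hI]; split <;> simp [Real.volume_Ioo] <;> norm_num
  -- key: the minimum is 1 on I, and the gaussian is at least gauss c (1/2) on I
  have hkey : ∀ z ∈ I, gauss c (1/2) ≤ f z := by
    intro z hz
    have hz12 : z ^ 2 ≤ (1/2 : ℝ) ^ 2 := by
      rw [hI] at hz
      split at hz <;> rcases hz with ⟨h1, h2⟩ <;> nlinarith
    have hU_le : U (x + z) ≤ U x := by
      rcases lt_or_ge 0 x with hx0 | hx0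
      · -- x > 1/2, z ∈ (-1/2, 0)
        have hz' : z ∈ Set.Ioo (-(1/2):ℝ) 0 := by rwa [hI, if_pos hx0] at hz
        have hx' : 1/2 < x := by rwa [abs_of_pos hx0] at hx
        exact rwm_aux_mono U hU_smooth hU_conv hU0 hU'0 (x + z) x
          (by linarith [hz'.1]) (by linarith [hz'.2])
      · -- x < -1/2, z ∈ (0, 1/2)
        have hz' : z ∈ Set.Ioo (0:ℝ) (1/2) := by
          rwa [hI, if_neg (not_lt.mpr hx0)] at hz
        have hx' : x < -(1/2) := by
          rcases abs_cases x with ⟨h1, h2⟩ | ⟨h1, h2⟩ <;> [linarith; linarith]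
        -- use the reflected function
        have hV_conv : StrictConvexOn ℝ Set.univ (fun y => U (-y)) := by
          refine ⟨convex_univ, fun y _ z _ hyz p q hp hq hpq => ?_⟩
          have h := hU_conv.2 (Set.mem_univ (-y)) (Set.mem_univ (-z))
            (fun h => hyz (neg_injective h)) hp hq hpq
          have e : p • (-y) + q • (-z) = -(p • y + q • z) := by
            simp [smul_eq_mul]; ring
          rw [e] at h
          exact h
        have hV_smooth : ContDiff ℝ 1 (fun y => U (-y)) :=
          hU_smooth.comp (contDiff_neg)
        have hV'0 : deriv (fun y => U (-y)) 0 = 0 := by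
          have hd : DifferentiableAt ℝ U 0 := (hU_smooth.differentiable one_ne_zero) 0
          have hd0 : HasDerivAt U (deriv U 0) (-(0:ℝ)) := by
            simpa using hd.hasDerivAt
          have h2 := hd0.comp 0 (hasDerivAt_neg 0)
          have h3 : deriv (fun y => U (-y)) 0 = deriv U 0 * -1 := h2.deriv
          rw [h3, hU'0]; ring
        have := rwm_aux_mono (fun y => U (-y)) hV_smooth hV_conv (by simpa using hU0)
          hV'0 (-(x + z)) (-x) (by linarith [hz'.2]) (by linarith [hz'.1])
        simpa using this
    have hmin : min 1 (π (x + z) / π x) = 1 := by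
      rw [min_eq_left_iff]
      rw [le_div_iff₀ (hπpos x), one_mul, hπ, hπ]
      apply div_le_div_of_nonneg_right _ hT.le
      · exact Real.exp_le_exp.mpr (by linarith)
    have hgz : gauss c (1/2) ≤ gauss c z := by
      rw [hgauss, hgauss]
      apply mul_le_mul_of_nonneg_left _ (inv_nonneg.mpr (Real.sqrt_nonneg _))
      apply Real.exp_le_exp.mpr
      apply div_le_div_of_nonneg_right _ (by positivity : (0:ℝ) ≤ 2 * c)
      · linarith
    rw [hf]; dsimp only; rw [hmin, one_mul]; exact hgz
  -- lower bound integral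
  have hg_int : Integrable (I.indicator (fun _ => gauss c (1/2))) := by
    apply (integrable_indicator_iff hImeas).mpr
    apply (integrableOn_const_iff (C := gauss c (1/2))).mpr
    right
    rw [hI]; split <;> exact measure_Ioo_lt_top
  have hmono : ∀ z, I.indicator (fun _ => gauss c (1/2)) z ≤ f z := by
    intro z
    by_cases hz : z ∈ I
    · rw [Set.indicator_of_mem hz]; exact hkey z hz
    · rw [Set.indicator_of_notMem hz]; exact hfnonneg z
  have hint_le : ∫ z, I.indicator (fun _ => gauss c (1/2)) z ≤ ∫ z, f z :=
    integral_mono hg_int hf_int hmono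
  have hind : ∫ z, I.indicator (fun _ => gauss c (1/2)) z = gauss c (1/2) / 2 := by
    rw [integral_indicator hImeas, setIntegral_const, measureReal_def, hIvol, smul_eq_mul]
    ring
  rw [ha]
  rw [hind] at hint_le
  exact hint_le
end

section
/- Let π be a probability density on ℝ proportional to exp(−U(x)), where U : ℝ → ℝ is continuously differentiable and strictly convex with U(0) = 0, U′(0) = 0, Var(π) = 1, and U(1) ≤ 2.6. Let c > 0, Z ∼ N(0, c), and a(x) = E[min{1, π(x+Z)/π(x)}]. Define U* = inf{x : U(x) ≤ U(1/2)} and y = max{U*, −1/2}. Then for every x ∈ [y, 1/2], a(x) ≥ φ_c(3/2)·e^{−U(1)}/2 ≥ φ_c(3/2)·e^{−2.6}/2, where φ_c is the density of N(0, c). -/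
open MeasureTheory

/-- **Acceptance rate bound near the mode (Case 1 of Proposition 3.1).**
Let `π ∝ exp(-U)` on `ℝ` with `U` continuously differentiable and strictly convex,
`U(0) = U'(0) = 0`, `Var(π) = 1`, and `U(1) ≤ 2.6`.  Let `c > 0`, `Z ∼ N(0, c)`, and
`a(x) = E[min{1, π(x+Z)/π(x)}]`.  With `U* = inf{x : U(x) ≤ U(1/2)}` and
`y = max{U*, −1/2}`, for every `x ∈ [y, 1/2]` one has
`a(x) ≥ φ_c(3/2)·e^{−U(1)}/2 ≥ φ_c(3/2)·e^{−2.6}/2`. -/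
theorem rwm_acceptance_rate_central_bound
    (U : ℝ → ℝ)
    (hU_smooth : ContDiff ℝ 1 U)
    (hU_conv : StrictConvexOn ℝ Set.univ U)
    (hU0 : U 0 = 0)
    (hU'0 : deriv U 0 = 0)
    (hU1 : U 1 ≤ 2.6)
    (hU_int : Integrable (fun x => Real.exp (-U x)))
    (π : ℝ → ℝ)
    (hπ : ∀ x, π x = Real.exp (-U x) / ∫ z, Real.exp (-U z))
    -- unit variance
    (hm1 : Integrable (fun x => x * π x))
    (hm2 : Integrable (fun x => x ^ 2 * π x))
    (hvar : (∫ x, x ^ 2 * π x) - (∫ x, x * π x) ^ 2 = 1)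
    (c : ℝ) (hc : 0 < c)
    -- densities of `N(0,w)`
    (gauss : ℝ → ℝ → ℝ)
    (hgauss : ∀ w z, gauss w z = (Real.sqrt (2 * Real.pi * w))⁻¹ *
      Real.exp (-z ^ 2 / (2 * w)))
    -- the average acceptance rate with Z ∼ N(0, c)
    (a : ℝ → ℝ)
    (ha : ∀ x, a x = ∫ z, min 1 (π (x + z) / π x) * gauss c z)
    -- the left extreme of the 1/2-level set of U, and y = max{U*, −1/2}
    (Ustar : ℝ) (hUstar : Ustar = sInf {x : ℝ | U x ≤ U (1 / 2)})
    (y : ℝ) (hy : y = max Ustar (-(1 / 2))) :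
    ∀ x : ℝ, y ≤ x → x ≤ 1 / 2 →
      gauss c (3 / 2) * Real.exp (-U 1) / 2 ≤ a x ∧
      gauss c (3 / 2) * Real.exp (-2.6) / 2 ≤ gauss c (3 / 2) * Real.exp (-U 1) / 2 := by
  have hUdiff : ∀ t : ℝ, DifferentiableAt ℝ U t := fun t =>
    (hU_smooth.differentiable one_ne_zero) t
  have hconv : ConvexOn ℝ Set.univ U := hU_conv.convexOn
  -- U ≥ 0 everywhere
  have hU_nonneg : ∀ t : ℝ, 0 ≤ U t := by
    intro t
    rcases lt_trichotomy t 0 with h | h | h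
    · have := hconv.slope_le_deriv (Set.mem_univ t) (Set.mem_univ 0) h (hUdiff 0)
      rw [hU'0, slope_def_field, hU0] at this
      have h' : (0 - U t) / (0 - t) ≤ 0 := this
      rcases div_nonpos_iff.mp h' with ⟨h1, h2⟩ | ⟨h1, h2⟩
      · linarith
      · linarith
    · simp [h, hU0]
    · have := hconv.deriv_le_slope (Set.mem_univ 0) (Set.mem_univ t) h (hUdiff 0)
      rw [hU'0, slope_def_field, hU0] at this
      have h' : 0 ≤ (U t - 0) / (t - 0) := this
      have := (div_nonneg_iff.mp h')
      rcases this with ⟨h1, _⟩ | ⟨h1, h2⟩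
      · linarith
      · linarith
  -- U on [0, 1/2] is bounded by U (1/2), and U (1/2) ≤ U 1
  have hUhalf_le : U (1/2) ≤ U 1 := by
    have := hconv.2 (Set.mem_univ (0:ℝ)) (Set.mem_univ (1:ℝ))
      (by norm_num : (0:ℝ) ≤ 1/2) (by norm_num : (0:ℝ) ≤ 1/2) (by norm_num)
    simp only [smul_eq_mul, hU0] at this
    have h1 := hU_nonneg 1
    have h2 : ((1:ℝ)/2) * 0 + (1/2) * 1 = 1/2 := by norm_num
    rw [h2] at this
    linarith
  have hU_le : ∀ t : ℝ, 0 ≤ t → t ≤ 1/2 → U t ≤ U 1 := by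
    intro t ht0 ht1
    have := hconv.2 (Set.mem_univ (0:ℝ)) (Set.mem_univ ((1:ℝ)/2))
      (by linarith : (0:ℝ) ≤ 1 - 2*t) (by linarith : (0:ℝ) ≤ 2*t) (by ring)
    simp only [smul_eq_mul, hU0] at this
    have h2 : (1 - 2*t) * 0 + (2*t) * (1/2) = t := by ring
    rw [h2] at this
    have h3 := hU_nonneg (1/2)
    nlinarith
  -- positivity of the normalizing constant and of π
  have hD : 0 < ∫ z, Real.exp (-U z) := by
    rw [integral_pos_iff_support_of_nonneg (fun z => (Real.exp_pos _).le) hU_int]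
    have : Function.support (fun x => Real.exp (-U x)) = Set.univ := by
      ext t; simp [Function.mem_support, (Real.exp_pos _).ne']
    rw [this]
    simp
  have hπpos : ∀ t, 0 < π t := by
    intro t; rw [hπ]; exact div_pos (Real.exp_pos _) hD
  have hratio : ∀ u v : ℝ, π u / π v = Real.exp (U v - U u) := by
    intro u v
    rw [hπ, hπ]
    rw [show Real.exp (-U u) / (∫ z, Real.exp (-U z)) /
        (Real.exp (-U v) / (∫ z, Real.exp (-U z))) =
        Real.exp (-U u) / Real.exp (-U v) from by
      field_simp]
    rw [← Real.exp_sub]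
    congr 1; ring
  -- gauss facts
  have hgauss_nonneg : ∀ z, 0 ≤ gauss c z := by
    intro z; rw [hgauss]; positivity
  have hgauss_mono : ∀ z : ℝ, z ^ 2 ≤ (3/2 : ℝ) ^ 2 → gauss c (3/2) ≤ gauss c z := by
    intro z hz
    rw [hgauss, hgauss]
    apply mul_le_mul_of_nonneg_left _ (by positivity)
    apply Real.exp_le_exp.mpr
    exact (div_le_div_iff_of_pos_right (by linarith)).mpr (by linarith)
  intro x hx1 hx2
  have hxlb : -(1/2 : ℝ) ≤ x := le_trans (hy ▸ le_max_right _ _) hx1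
  -- define the integrand
  set f : ℝ → ℝ := fun z => min 1 (π (x + z) / π x) * gauss c z with hf
  have hf_eq : ∀ z, f z = min 1 (Real.exp (U x - U (x + z))) * gauss c z := by
    intro z; rw [hf]; simp only [hratio]
  have hf_nonneg : ∀ z, 0 ≤ f z := by
    intro z
    exact mul_nonneg (le_min zero_le_one (le_of_lt (div_pos (hπpos _) (hπpos _))))
      (hgauss_nonneg z)
  have hf_le : ∀ z, f z ≤ gauss c z := by
    intro z
    exact mul_le_of_le_one_left (hgauss_nonneg z) (min_le_left _ _)
  -- integrability
  have hgauss_int : Integrable (fun z => gauss c z) := by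
    have : (fun z => gauss c z) = fun z =>
        (Real.sqrt (2 * Real.pi * c))⁻¹ * Real.exp (-(1/(2*c)) * z ^ 2) := by
      funext z; rw [hgauss]; ring_nf
    rw [this]
    exact (integrable_exp_neg_mul_sq (by positivity)).const_mul _
  have hf_cont : Continuous f := by
    have : f = fun z => min 1 (Real.exp (U x - U (x + z))) *
        ((Real.sqrt (2 * Real.pi * c))⁻¹ * Real.exp (-z ^ 2 / (2 * c))) := by
      funext z; rw [hf_eq, hgauss]
    rw [this]
    have hUc := hU_smooth.continuous
    fun_prop
  have hf_int : Integrable f := by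
    apply Integrable.mono' hgauss_int hf_cont.aestronglyMeasurable
    filter_upwards with z
    rw [Real.norm_eq_abs, abs_of_nonneg (hf_nonneg z)]
    exact hf_le z
  -- the interval
  set s : Set ℝ := Set.Icc (-x) (1/2 - x) with hs
  have hμs : volume s = ENNReal.ofReal (1/2) := by
    rw [hs, Real.volume_Icc]; norm_num
  have hlow : ∀ z ∈ s, Real.exp (-U 1) * gauss c (3/2) ≤ f z := by
    intro z hz
    obtain ⟨hz1, hz2⟩ := hz
    have hxz0 : 0 ≤ x + z := by linarith
    have hxz1 : x + z ≤ 1/2 := by linarith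
    have hUxz : U (x + z) ≤ U 1 := hU_le _ hxz0 hxz1
    have hz32 : z ^ 2 ≤ (3/2 : ℝ) ^ 2 := by nlinarith
    have hmin : Real.exp (-U 1) ≤ min 1 (Real.exp (U x - U (x + z))) := by
      apply le_min
      · exact Real.exp_le_one_iff.mpr (by linarith [hU_nonneg 1])
      · apply Real.exp_le_exp.mpr
        have := hU_nonneg x
        linarith
    rw [hf_eq]
    exact mul_le_mul hmin (hgauss_mono z hz32) (hgauss_nonneg _)
      (le_trans (Real.exp_pos _).le hmin)
  have key : Real.exp (-U 1) * gauss c (3/2) * (1/2) ≤ a x := by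
    have h1 : Real.exp (-U 1) * gauss c (3/2) * (volume s).toReal ≤ ∫ z in s, f z :=
      by have h := setIntegral_ge_of_const_le measurableSet_Icc
           (by rw [hμs]; exact ENNReal.ofReal_ne_top) hlow hf_int.integrableOn
         rw [smul_eq_mul, mul_comm] at h; exact h
    have h2 : ∫ z in s, f z ≤ ∫ z, f z :=
      setIntegral_le_integral hf_int (Filter.Eventually.of_forall hf_nonneg)
    have h3 : (volume s).toReal = 1/2 := by rw [hμs, ENNReal.toReal_ofReal]; norm_num
    rw [ha x]
    calc Real.exp (-U 1) * gauss c (3/2) * (1/2)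
        = Real.exp (-U 1) * gauss c (3/2) * (volume s).toReal := by rw [h3]
      _ ≤ ∫ z in s, f z := h1
      _ ≤ ∫ z, f z := h2
  constructor
  · calc gauss c (3/2) * Real.exp (-U 1) / 2
        = Real.exp (-U 1) * gauss c (3/2) * (1/2) := by ring
      _ ≤ a x := key
  · have h : Real.exp (-2.6) ≤ Real.exp (-U 1) :=
      Real.exp_le_exp.mpr (by linarith)
    have h2 := mul_le_mul_of_nonneg_left h (hgauss_nonneg (3/2))
    linarith
end

section
/- Let U : ℝ → ℝ be continuously differentiable and convex with U(0) = 0, U′(0) = 0, and U(1) > 0, and suppose exp(−U) is integrable; let π(x) = exp(−U(x))/∫_ℝ exp(−U(s)) ds. Then ∫_1^{+∞} x² π(x) dx ≤ h(U(1)), where h(t) = (1/(e^t − 1))·(1 + 2/t + 2/t²). -/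
open MeasureTheory Set Filter

/-- **Tail second-moment bound (second estimate in Lemma 3.2).**
Let `U : ℝ → ℝ` be continuously differentiable and convex with `U(0) = U'(0) = 0`
and `U(1) > 0`, with `exp(-U)` integrable, and let `π(x) = exp(-U(x)) / ∫ exp(-U)`.
Then `∫_1^∞ x² π(x) dx ≤ h(U(1))`, where `h(t) = (1/(eᵗ − 1))·(1 + 2/t + 2/t²)`. -/
theorem tail_second_moment_le
    (U : ℝ → ℝ)
    (hU_smooth : ContDiff ℝ 1 U)
    (hU_conv : ConvexOn ℝ Set.univ U)
    (hU0 : U 0 = 0)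
    (hU'0 : deriv U 0 = 0)
    (hU1_pos : 0 < U 1)
    (hU_int : Integrable (fun x => Real.exp (-U x)))
    (π : ℝ → ℝ)
    (hπ : ∀ x, π x = Real.exp (-U x) / ∫ s, Real.exp (-U s))
    (h : ℝ → ℝ)
    (hh : ∀ t, h t = 1 / (Real.exp t - 1) * (1 + 2 / t + 2 / t ^ 2)) :
    ∫ x in Set.Ioi (1 : ℝ), x ^ 2 * π x ≤ h (U 1) := by
  set a := U 1 with ha
  have ha0 : 0 < a := hU1_pos
  have hane : a ≠ 0 := ne_of_gt ha0
  set Z := ∫ s, Real.exp (-U s) with hZ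
  have hZpos : 0 < Z := integral_exp_pos hU_int
  -- convexity bounds
  have hUb : ∀ x ∈ Set.Ioc (0:ℝ) 1, U x ≤ a * x := by
    intro x hx
    have := hU_conv.2 (Set.mem_univ (0:ℝ)) (Set.mem_univ (1:ℝ))
      (by linarith [hx.2] : (0:ℝ) ≤ 1 - x) hx.1.le (by ring)
    simp only [smul_eq_mul, mul_zero, mul_one, zero_add] at this
    rw [hU0] at this
    linarith
  have hUg : ∀ x ∈ Set.Ioi (1:ℝ), a * x ≤ U x := by
    intro x hx
    have hx1 : (1:ℝ) < x := hx
    have hxpos : (0:ℝ) < x := by linarith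
    have hcx : (0:ℝ) ≤ 1 - 1/x := by
      have : 1/x ≤ 1 := by rw [div_le_one hxpos]; linarith
      linarith
    have key := hU_conv.2 (Set.mem_univ (0:ℝ)) (Set.mem_univ x)
      hcx (by positivity : (0:ℝ) ≤ 1/x) (by ring)
    have heq : (1 - 1/x) • (0:ℝ) + (1/x) • x = 1 := by
      simp only [smul_eq_mul, mul_zero, zero_add]
      field_simp
    rw [heq] at key
    simp only [smul_eq_mul, mul_zero, zero_add] at key
    rw [hU0, mul_zero, zero_add] at key
    have h2 : a * x ≤ (1/x * U x) * x := by nlinarith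
    calc a * x ≤ (1/x * U x) * x := h2
    _ = U x := by field_simp
  -- lower bound on Z
  have hcontg : Continuous (fun x : ℝ => Real.exp (-a * x)) := by
    continuity
  have hZ1 : ∫ x in Set.Ioc (0:ℝ) 1, Real.exp (-a * x)
      ≤ ∫ x in Set.Ioc (0:ℝ) 1, Real.exp (-U x) := by
    apply setIntegral_mono_on (hcontg.integrableOn_Ioc) (hU_int.integrableOn)
      measurableSet_Ioc
    intro x hx
    exact Real.exp_le_exp.2 (by linarith [hUb x hx])
  have hZ2 : ∫ x in Set.Ioc (0:ℝ) 1, Real.exp (-U x) ≤ Z :=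
    setIntegral_le_integral hU_int (Filter.Eventually.of_forall fun x => (Real.exp_pos _).le)
  have hZ3 : ∫ x in Set.Ioc (0:ℝ) 1, Real.exp (-a * x) = (1 - Real.exp (-a)) / a := by
    rw [← intervalIntegral.integral_of_le zero_le_one]
    have hderiv : ∀ x ∈ Set.uIcc (0:ℝ) 1,
        HasDerivAt (fun y => -Real.exp (-a * y) / a) (Real.exp (-a * x)) x := by
      intro x _
      have h1 : HasDerivAt (fun y : ℝ => -a * y) (-a) x := by
        simpa using (hasDerivAt_id x).const_mul (-a)
      have h2 : HasDerivAt (fun y => Real.exp (-a * y)) (Real.exp (-a * x) * (-a)) x :=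
        (Real.hasDerivAt_exp (-a * x)).comp x h1
      have := (h2.neg).div_const a
      refine this.congr_deriv ?_
      field_simp
    rw [intervalIntegral.integral_eq_sub_of_hasDerivAt hderiv
      (hcontg.intervalIntegrable 0 1)]
    simp
    field_simp
    ring
  have hZge : (1 - Real.exp (-a)) / a ≤ Z := by
    rw [← hZ3]; exact le_trans hZ1 hZ2
  have hcpos : 0 < (1 - Real.exp (-a)) / a := by
    apply div_pos _ ha0
    have : Real.exp (-a) < 1 := Real.exp_lt_one_iff.2 (by linarith)
    linarith
  -- tail integral of the comparison function
  set F : ℝ → ℝ := fun x => -((x^2/a + 2*x/a^2 + 2/a^3) * Real.exp (-a * x)) with hF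
  have hdF : ∀ x : ℝ, HasDerivAt F (x^2 * Real.exp (-a * x)) x := by
    intro x
    have h1 : HasDerivAt (fun y : ℝ => y^2/a + 2*y/a^2 + 2/a^3) (2*x/a + 2/a^2) x := by
      have := (((hasDerivAt_pow 2 x).div_const a).add
        (((hasDerivAt_id x).const_mul 2).div_const (a^2))).add_const (2/a^3)
      refine this.congr_deriv ?_
      simp
    have hl : HasDerivAt (fun y : ℝ => -a * y) (-a) x := by
      simpa using (hasDerivAt_id x).const_mul (-a)
    have h2 : HasDerivAt (fun y => Real.exp (-a * y)) (Real.exp (-a * x) * (-a)) x :=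
      (Real.hasDerivAt_exp (-a * x)).comp x hl
    have := (h1.mul h2).neg
    refine this.congr_deriv ?_
    field_simp
    ring
  have ht2 : Tendsto (fun x : ℝ => x^2 * Real.exp (-a * x)) atTop (nhds 0) := by
    have := tendsto_rpow_mul_exp_neg_mul_atTop_nhds_zero 2 a ha0
    refine this.congr' ?_
    filter_upwards [eventually_ge_atTop (0:ℝ)] with x hx
    rw [show ((2:ℝ)) = ((2:ℕ):ℝ) by norm_num, Real.rpow_natCast]
  have ht1 : Tendsto (fun x : ℝ => x * Real.exp (-a * x)) atTop (nhds 0) := by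
    have := tendsto_rpow_mul_exp_neg_mul_atTop_nhds_zero 1 a ha0
    refine this.congr' ?_
    filter_upwards [eventually_ge_atTop (0:ℝ)] with x hx
    rw [show ((1:ℝ)) = ((1:ℕ):ℝ) by norm_num, Real.rpow_natCast, pow_one]
  have ht0 : Tendsto (fun x : ℝ => Real.exp (-a * x)) atTop (nhds 0) := by
    have := tendsto_rpow_mul_exp_neg_mul_atTop_nhds_zero 0 a ha0
    refine this.congr' ?_
    filter_upwards [eventually_gt_atTop (0:ℝ)] with x hx
    rw [Real.rpow_zero, one_mul]
  have htF : Tendsto F atTop (nhds 0) := by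
    have := (((ht2.const_mul (1/a)).add (ht1.const_mul (2/a^2))).add
      (ht0.const_mul (2/a^3))).neg
    simp only [mul_zero, add_zero, neg_zero] at this
    refine this.congr fun x => ?_
    simp only [hF]
    ring
  have hnonneg : ∀ x ∈ Set.Ioi (1:ℝ), 0 ≤ x^2 * Real.exp (-a * x) := by
    intro x _; positivity
  have hcontF : ContinuousWithinAt F (Set.Ici 1) 1 :=
    (hdF 1).continuousAt.continuousWithinAt
  have hIntG : IntegrableOn (fun x : ℝ => x^2 * Real.exp (-a * x)) (Set.Ioi 1) :=
    integrableOn_Ioi_deriv_of_nonneg hcontF (fun x _ => hdF x) hnonneg htF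
  have hvalG : ∫ x in Set.Ioi (1:ℝ), x^2 * Real.exp (-a * x)
      = (1/a + 2/a^2 + 2/a^3) * Real.exp (-a) := by
    rw [integral_Ioi_of_hasDerivAt_of_nonneg hcontF (fun x _ => hdF x) hnonneg htF]
    simp only [hF, one_pow, mul_one]
    ring
  -- tail integrability and comparison for exp(-U)
  have hUcont : Continuous U := hU_smooth.continuous
  have hIntU : IntegrableOn (fun x : ℝ => x^2 * Real.exp (-U x)) (Set.Ioi 1) := by
    apply Integrable.mono' hIntG
    · exact (((continuous_pow 2).mul (Real.continuous_exp.comp hUcont.neg)).aestronglyMeasurable).restrict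
    · rw [ae_restrict_iff' measurableSet_Ioi]
      refine Filter.Eventually.of_forall fun x hx => ?_
      have hx1 : (1:ℝ) < x := hx
      have h1 : (0:ℝ) ≤ x^2 * Real.exp (-U x) := by positivity
      rw [Real.norm_eq_abs, abs_of_nonneg h1]
      have : Real.exp (-U x) ≤ Real.exp (-a * x) :=
        Real.exp_le_exp.2 (by linarith [hUg x hx])
      nlinarith [sq_nonneg x]
  have hTle : ∫ x in Set.Ioi (1:ℝ), x^2 * Real.exp (-U x)
      ≤ (1/a + 2/a^2 + 2/a^3) * Real.exp (-a) := by
    rw [← hvalG]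
    apply setIntegral_mono_on hIntU hIntG measurableSet_Ioi
    intro x hx
    have : Real.exp (-U x) ≤ Real.exp (-a * x) :=
      Real.exp_le_exp.2 (by linarith [hUg x hx])
    nlinarith [sq_nonneg x]
  have hTnn : 0 ≤ ∫ x in Set.Ioi (1:ℝ), x^2 * Real.exp (-U x) := by
    apply integral_nonneg
    intro x; positivity
  -- rewrite the goal
  have hgoal : ∫ x in Set.Ioi (1:ℝ), x ^ 2 * π x
      = (∫ x in Set.Ioi (1:ℝ), x^2 * Real.exp (-U x)) / Z := by
    simp_rw [hπ, ← mul_div_assoc]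
    exact integral_div Z _
  rw [hgoal, hh]
  have hMnn : (0:ℝ) ≤ (1/a + 2/a^2 + 2/a^3) * Real.exp (-a) := by positivity
  have hstep : (∫ x in Set.Ioi (1:ℝ), x^2 * Real.exp (-U x)) / Z
      ≤ ((1/a + 2/a^2 + 2/a^3) * Real.exp (-a)) / ((1 - Real.exp (-a)) / a) :=
    div_le_div₀ hMnn hTle hcpos hZge
  refine hstep.trans_eq ?_
  have hexpne : Real.exp (-a) ≠ 0 := (Real.exp_pos _).ne'
  have hea : Real.exp a * Real.exp (-a) = 1 := by
    rw [← Real.exp_add]; simp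
  have h1m : 1 - Real.exp (-a) = (Real.exp a - 1) * Real.exp (-a) := by
    rw [sub_mul, hea, one_mul]
  have heane : Real.exp a - 1 ≠ 0 := by
    have : 1 < Real.exp a := Real.one_lt_exp_iff.2 ha0
    linarith
  rw [h1m]
  field_simp
end
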